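/- arXiv:1709.05450 — 7 statements merged into one kernel-verified Lean document; each statement's English description precedes it below -/
import Mathlib

section
/- For positive definite matrices B, C and a real number s ≠ 1, if A = B #_s C then B = C #_{1/(1-s)} A. -/
set_option maxHeartbeats 1000000


open Matrix ComplexOrder

noncomputable def mlog {n : Type*} [Fintype n] [DecidableEq n] (A : Matrix n n ℂ) : Matrix n n ℂ :=
  cfc Real.log A

noncomputable def mpow {n : Type*} [Fintype n] [DecidableEq n] (A : Matrix n n ℂ) (p : ℝ) :
    Matrix n n ℂ :=
  cfc (fun x : ℝ => x ^ p) A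

noncomputable def rtr {n : Type*} [Fintype n] [DecidableEq n] (A : Matrix n n ℂ) : ℝ :=
  A.trace.re

/-- The weighted geometric mean `A #_t B = A^{1/2} (A^{-1/2} B A^{-1/2})^t A^{1/2}`,
defined for all real `t`. -/
noncomputable def gm {n : Type*} [Fintype n] [DecidableEq n] (A B : Matrix n n ℂ) (t : ℝ) :
    Matrix n n ℂ :=
  mpow A (1 / 2) * mpow (mpow A (-(1 / 2)) * B * mpow A (-(1 / 2))) t * mpow A (1 / 2)

namespace AuxGM

variable {n : Type*} [Fintype n] [DecidableEq n]

lemma contOn (f : ℝ → ℝ) (A : Matrix n n ℂ) : ContinuousOn f (spectrum ℝ A) :=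
  (Matrix.finite_real_spectrum (A := A)).continuousOn f

lemma spec_pos {M : Matrix n n ℂ} (hM : M.PosDef) : ∀ x ∈ spectrum ℝ M, 0 < x := by
  rw [hM.1.spectrum_real_eq_range_eigenvalues]
  rintro x ⟨i, rfl⟩
  exact hM.eigenvalues_pos i

lemma posDef_conj {M : Matrix n n ℂ} (hM : M.PosDef) {N : Matrix n n ℂ} (hN : IsUnit N) :
    (N * M * Nᴴ).PosDef := by
  exact hM.mul_mul_conjTranspose_same (Matrix.vecMul_injective_iff_isUnit.mpr hN)

lemma posDef_cfc {M : Matrix n n ℂ} (hM : M.PosDef) (f : ℝ → ℝ)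
    (hf : ∀ x ∈ spectrum ℝ M, 0 < f x) : (cfc f M).PosDef := by
  rw [hM.1.cfc_eq f]
  have hcfc : hM.1.cfc f = (hM.1.eigenvectorUnitary : Matrix n n ℂ) *
      Matrix.diagonal (RCLike.ofReal ∘ f ∘ hM.1.eigenvalues) *
      star (hM.1.eigenvectorUnitary : Matrix n n ℂ) := rfl
  rw [hcfc]
  have hU : IsUnit (hM.1.eigenvectorUnitary : Matrix n n ℂ) := by
    exact (Matrix.isUnit_iff_isUnit_det _).mpr <| Matrix.isUnit_det_of_right_inverse
      (Unitary.mul_star_self_of_mem (R := Matrix n n ℂ) (SetLike.coe_mem hM.1.eigenvectorUnitary))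
  have hd : (Matrix.diagonal (RCLike.ofReal ∘ f ∘ hM.1.eigenvalues) : Matrix n n ℂ).PosDef := by
    refine Matrix.PosDef.diagonal fun i => ?_
    have h := hf _ (hM.1.eigenvalues_mem_spectrum_real i)
    simpa using Complex.zero_lt_real.mpr h
  have := posDef_conj hd hU
  rwa [← star_eq_conjTranspose] at this


lemma mpow_posDef {M : Matrix n n ℂ} (hM : M.PosDef) (p : ℝ) : (mpow M p).PosDef :=
  posDef_cfc hM _ fun x hx => Real.rpow_pos_of_pos (spec_pos hM x hx) p

lemma mpow_herm {M : Matrix n n ℂ} (hM : M.PosDef) (p : ℝ) : IsSelfAdjoint (mpow M p) :=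
  (mpow_posDef hM p).1.isSelfAdjoint

lemma mpow_conjTranspose {M : Matrix n n ℂ} (hM : M.PosDef) (p : ℝ) : (mpow M p)ᴴ = mpow M p :=
  (mpow_posDef hM p).1

lemma mpow_add {M : Matrix n n ℂ} (hM : M.PosDef) (a b : ℝ) :
    mpow M a * mpow M b = mpow M (a + b) := by
  unfold mpow
  rw [← cfc_mul _ _ M (contOn _ M) (contOn _ M)]
  exact cfc_congr fun x hx => (Real.rpow_add (spec_pos hM x hx) a b).symm

lemma mpow_zero {M : Matrix n n ℂ} (hM : M.PosDef) : mpow M 0 = 1 := by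
  unfold mpow
  simp only [Real.rpow_zero]
  exact cfc_const_one ℝ M hM.1.isSelfAdjoint

lemma mpow_one {M : Matrix n n ℂ} (hM : M.PosDef) : mpow M 1 = M := by
  unfold mpow
  have h : cfc (fun x : ℝ => x ^ (1 : ℝ)) M = cfc (id : ℝ → ℝ) M :=
    cfc_congr fun x _ => Real.rpow_one x
  rw [h, cfc_id ℝ M hM.1.isSelfAdjoint]

lemma mpow_mul {M : Matrix n n ℂ} (hM : M.PosDef) (a b : ℝ) :
    mpow (mpow M a) b = mpow M (a * b) := by
  unfold mpow
  rw [← cfc_comp (fun x : ℝ => x ^ b) (fun x : ℝ => x ^ a) M hM.1.isSelfAdjoint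
    (((spectrum ℝ M).toFinite.image _).continuousOn _) (contOn _ M)]
  exact cfc_congr fun x hx => by
    simp only [Function.comp_apply]
    exact (Real.rpow_mul (spec_pos hM x hx).le a b).symm

lemma mpow_isUnit {M : Matrix n n ℂ} (hM : M.PosDef) (p : ℝ) : IsUnit (mpow M p) :=
  (mpow_posDef hM p).isUnit

lemma mpow_neg_one {M : Matrix n n ℂ} (hM : M.PosDef) : mpow M (-1) = M⁻¹ := by
  have h := mpow_add hM (-1) 1
  rw [neg_add_cancel, mpow_zero hM, mpow_one hM] at h
  exact (Matrix.inv_eq_left_inv h).symm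

lemma mpow_half_mul_half {M : Matrix n n ℂ} (hM : M.PosDef) :
    mpow M (1/2) * mpow M (1/2) = M := by
  rw [mpow_add hM]; norm_num; exact mpow_one hM

lemma mpow_half_cancel {M : Matrix n n ℂ} (hM : M.PosDef) :
    mpow M (1/2) * mpow M (-(1/2)) = 1 := by
  rw [mpow_add hM]; norm_num; exact mpow_zero hM

lemma mpow_half_cancel' {M : Matrix n n ℂ} (hM : M.PosDef) :
    mpow M (-(1/2)) * mpow M (1/2) = 1 := by
  rw [mpow_add hM]; norm_num; exact mpow_zero hM


lemma semiconj_aeval {N M P : Matrix n n ℂ} (h : M * N = N * P) (p : Polynomial ℝ) :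
    (Polynomial.aeval M p) * N = N * (Polynomial.aeval P p) := by
  have hpow : ∀ k : ℕ, M ^ k * N = N * P ^ k := by
    intro k
    induction k with
    | zero => simp
    | succ k ih => rw [pow_succ, pow_succ, mul_assoc, h, ← mul_assoc, ih, mul_assoc]
  induction p using Polynomial.induction_on' with
  | add p q hp hq => simp only [map_add, add_mul, mul_add, hp, hq]
  | monomial k c =>
    simp only [Polynomial.aeval_monomial]
    rw [mul_assoc, hpow k, ← mul_assoc, Algebra.commutes, mul_assoc]

lemma cfc_mul_conjTranspose_comm (f : ℝ → ℝ) (N : Matrix n n ℂ) :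
    cfc f (N * Nᴴ) * N = N * cfc f (Nᴴ * N) := by
  have h₁ : IsSelfAdjoint (N * Nᴴ) :=
    (Matrix.posSemidef_self_mul_conjTranspose N).1.isSelfAdjoint
  have h₂ : IsSelfAdjoint (Nᴴ * N) :=
    (Matrix.posSemidef_conjTranspose_mul_self N).1.isSelfAdjoint
  have hfin : (spectrum ℝ (N * Nᴴ) ∪ spectrum ℝ (Nᴴ * N)).Finite :=
    Matrix.finite_real_spectrum.union Matrix.finite_real_spectrum
  set p := Lagrange.interpolate hfin.toFinset id f with hpdef
  have hp : ∀ x ∈ spectrum ℝ (N * Nᴴ) ∪ spectrum ℝ (Nᴴ * N), p.eval x = f x := fun x hx =>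
    Lagrange.eval_interpolate_at_node f (Set.injOn_id _) (hfin.mem_toFinset.mpr hx)
  have e₁ : cfc f (N * Nᴴ) = Polynomial.aeval (N * Nᴴ) p := by
    rw [← cfc_polynomial p (N * Nᴴ) h₁]
    exact cfc_congr fun x hx => (hp x (Or.inl hx)).symm
  have e₂ : cfc f (Nᴴ * N) = Polynomial.aeval (Nᴴ * N) p := by
    rw [← cfc_polynomial p (Nᴴ * N) h₂]
    exact cfc_congr fun x hx => (hp x (Or.inr hx)).symm
  rw [e₁, e₂]
  exact semiconj_aeval (mul_assoc N Nᴴ N) p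

end AuxGM

theorem stmt8 {n : Type*} [Fintype n] [DecidableEq n]
    (A B C : Matrix n n ℂ) (hB : B.PosDef) (hC : C.PosDef) (s : ℝ) (hs : s ≠ 1)
    (hA : A = gm B C s) :
    B = gm C A (1 / (1 - s)) := by
  have h1s : (1 : ℝ) - s ≠ 0 := sub_ne_zero.mpr (Ne.symm hs)
  have L : ∀ {x y : Matrix n n ℂ}, x * y = 1 → ∀ z, x * (y * z) = z := by
    intro x y h z; rw [← mul_assoc, h, one_mul]
  haveI := hB.isUnit.invertible
  unfold gm at hA ⊢
  set b := mpow B (1 / 2) with hbdef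
  set b' := mpow B (-(1 / 2)) with hb'def
  set c := mpow C (1 / 2) with hcdef
  set c' := mpow C (-(1 / 2)) with hc'def
  have hbb' : b * b' = 1 := AuxGM.mpow_half_cancel hB
  have hb'b : b' * b = 1 := AuxGM.mpow_half_cancel' hB
  have hcc' : c * c' = 1 := AuxGM.mpow_half_cancel hC
  have hc'c : c' * c = 1 := AuxGM.mpow_half_cancel' hC
  have hB2 : b * b = B := AuxGM.mpow_half_mul_half hB
  have hC2 : c * c = C := AuxGM.mpow_half_mul_half hC
  have hbH : bᴴ = b := AuxGM.mpow_conjTranspose hB _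
  have hb'H : b'ᴴ = b' := AuxGM.mpow_conjTranspose hB _
  have hcH : cᴴ = c := AuxGM.mpow_conjTranspose hC _
  have hc'H : c'ᴴ = c' := AuxGM.mpow_conjTranspose hC _
  have hBinv : b' * b' = B⁻¹ := by
    rw [← AuxGM.mpow_neg_one hB, hb'def, AuxGM.mpow_add hB]
    norm_num
  set Z := c' * B * c' with hZdef
  have hZ : Z.PosDef := by
    have h := AuxGM.posDef_conj hB (AuxGM.mpow_isUnit hC (-(1 / 2)))
    rwa [AuxGM.mpow_conjTranspose hC] at h
  set N := b' * c with hNdef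
  have hNNH : N * Nᴴ = b' * C * b' := by
    rw [hNdef, conjTranspose_mul, hcH, hb'H, ← hC2]
    simp only [mul_assoc]
  have hNHN : Nᴴ * N = c * B⁻¹ * c := by
    rw [hNdef, conjTranspose_mul, hcH, hb'H, ← hBinv]
    simp only [mul_assoc]
  have hZinv : Z⁻¹ = c * B⁻¹ * c := by
    apply Matrix.inv_eq_right_inv
    rw [hZdef]
    simp only [mul_assoc]
    rw [L hc'c, Matrix.mul_inv_cancel_left_of_invertible, hc'c]
  have hNHNZ : Nᴴ * N = Z⁻¹ := by rw [hNHN, hZinv]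
  have key : mpow (N * Nᴴ) s * N = N * mpow (Nᴴ * N) s :=
    AuxGM.cfc_mul_conjTranspose_comm _ N
  have h5 : mpow (Nᴴ * N) s = mpow Z (-s) := by
    rw [hNHNZ, ← AuxGM.mpow_neg_one hZ, AuxGM.mpow_mul hZ, neg_one_mul]
  rw [h5] at key
  have hNr : N * (c' * b) = 1 := by
    rw [hNdef]
    simp only [mul_assoc]
    rw [L hcc', hb'b]
  have hZc : Z * c = c' * B := by
    rw [hZdef]
    simp only [mul_assoc]
    rw [hc'c, mul_one]
  have h6 := congrArg (· * (c' * b)) key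
  simp only [mul_assoc] at h6
  rw [hNr, mul_one] at h6
  -- h6 : mpow (N * Nᴴ) s = N * (mpow Z (-s) * (c' * b))
  rw [← hNNH, h6, hNdef] at hA
  have hAeq : A = c * (mpow Z (1 - s) * c) := by
    rw [hA]
    simp only [mul_assoc]
    rw [L hbb', hB2]
    -- A-side now: c * (mpow Z (-s) * (c' * B))
    have hmul : mpow Z (-s) * Z = mpow Z (1 - s) := by
      have h := AuxGM.mpow_add hZ (-s) 1
      rwa [AuxGM.mpow_one hZ, show -s + 1 = 1 - s by ring] at h
    rw [← hZc, ← mul_assoc (mpow Z (-s)) Z c, hmul]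
  have h7 : c' * A * c' = mpow Z (1 - s) := by
    rw [hAeq]
    simp only [mul_assoc]
    rw [L hc'c, hcc', mul_one]
  rw [h7, AuxGM.mpow_mul hZ, show (1 - s) * (1 / (1 - s)) = 1 by field_simp,
    AuxGM.mpow_one hZ, hZdef]
  simp only [mul_assoc]
  rw [hc'c, mul_one, L hcc']
end

section
/- For all positive definite n×n matrices X, Y and all real t₀, t₁, t: X #_{(1-t)t₀ + t t₁} Y = (X #_{t₀} Y) #_t (X #_{t₁} Y). -/
open Matrix ComplexOrder

section Aux

variable {n : Type*} [Fintype n] [DecidableEq n]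

lemma spec_pos {A : Matrix n n ℂ} (hA : A.PosDef) : ∀ x ∈ spectrum ℝ A, 0 < x := by
  rw [hA.isHermitian.spectrum_real_eq_range_eigenvalues]
  rintro x ⟨i, rfl⟩
  exact hA.eigenvalues_pos i

lemma contOn {A : Matrix n n ℂ} (hA : A.PosDef) (p : ℝ) :
    ContinuousOn (fun x : ℝ => x ^ p) (spectrum ℝ A) := fun x hx =>
  (Real.continuousAt_rpow_const x p (Or.inl (spec_pos hA x hx).ne')).continuousWithinAt

lemma mpow_herm (A : Matrix n n ℂ) (p : ℝ) : (mpow A p).IsHermitian := cfc_predicate _ A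

lemma star_mpow (A : Matrix n n ℂ) (p : ℝ) : star (mpow A p) = mpow A p := by
  rw [star_eq_conjTranspose]; exact (mpow_herm A p).eq

lemma mpow_mul_mpow {A : Matrix n n ℂ} (hA : A.PosDef) (p q : ℝ) :
    mpow A p * mpow A q = mpow A (p + q) := by
  rw [mpow, mpow, ← cfc_mul _ _ A (contOn hA p) (contOn hA q)]
  exact cfc_congr fun x hx => (Real.rpow_add (spec_pos hA x hx) p q).symm

lemma mpow_zero {A : Matrix n n ℂ} (hA : A.IsHermitian) : mpow A 0 = 1 := by
  rw [mpow]
  simp only [Real.rpow_zero]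
  exact cfc_one ℝ A

lemma mpow_one {A : Matrix n n ℂ} (hA : A.IsHermitian) : mpow A 1 = A := by
  rw [mpow]
  simp only [Real.rpow_one]
  exact cfc_id ℝ A

lemma posDef_of_posSemidef_isUnit {A : Matrix n n ℂ} (h1 : A.PosSemidef) (h2 : IsUnit A) :
    A.PosDef := by
  exact h1.posDef_iff_isUnit.mpr h2

lemma mpow_posDef {A : Matrix n n ℂ} (hA : A.PosDef) (p : ℝ) : (mpow A p).PosDef := by
  have hh : (mpow A p).IsHermitian := cfc_predicate _ A
  have hspec : spectrum ℝ (mpow A p) = (fun x : ℝ => x ^ p) '' spectrum ℝ A :=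
    cfc_map_spectrum (R := ℝ) _ A (ha := hA.isHermitian) (hf := contOn hA p)
  refine posDef_of_posSemidef_isUnit (hh.posSemidef_iff_eigenvalues_nonneg.mpr fun i => ?_) ?_
  · have hmem : hh.eigenvalues i ∈ spectrum ℝ (mpow A p) := by
      rw [hh.spectrum_real_eq_range_eigenvalues]; exact ⟨i, rfl⟩
    rw [hspec] at hmem
    obtain ⟨x, hx, hxe⟩ := hmem
    rw [← hxe]
    exact (Real.rpow_pos_of_pos (spec_pos hA x hx) p).le
  · refine ⟨⟨mpow A p, mpow A (-p), ?_, ?_⟩, rfl⟩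
    · rw [mpow_mul_mpow hA, add_neg_cancel, mpow_zero hA.isHermitian]
    · rw [mpow_mul_mpow hA, neg_add_cancel, mpow_zero hA.isHermitian]

lemma mpow_mpow {A : Matrix n n ℂ} (hA : A.PosDef) (p q : ℝ) :
    mpow (mpow A p) q = mpow A (p * q) := by
  have h1 : spectrum ℝ (mpow A p) = (fun x : ℝ => x ^ p) '' spectrum ℝ A :=
    cfc_map_spectrum (R := ℝ) _ A (ha := hA.isHermitian) (hf := contOn hA p)
  show cfc (fun x : ℝ => x ^ q) (cfc (fun x : ℝ => x ^ p) A) = cfc (fun x : ℝ => x ^ (p * q)) A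
  rw [← cfc_comp (fun x : ℝ => x ^ q) (fun x : ℝ => x ^ p) A hA.isHermitian.isSelfAdjoint
    (by rw [show (fun x : ℝ => x ^ p) '' spectrum ℝ A = spectrum ℝ (mpow A p) from h1.symm]
        exact contOn (mpow_posDef hA p) q) (contOn hA p)]
  exact cfc_congr fun x hx => by
    show (x ^ p) ^ q = x ^ (p * q)
    rw [← Real.rpow_mul (spec_pos hA x hx).le]

/-- Conjugation by a unitary as a star algebra homomorphism. -/
noncomputable def conjSAH (u : Matrix n n ℂ) (hu : u ∈ unitary (Matrix n n ℂ)) :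
    Matrix n n ℂ →⋆ₐ[ℂ] Matrix n n ℂ where
  toFun a := u * a * star u
  map_one' := by
    show u * 1 * star u = 1
    rw [mul_one]; exact (Unitary.mem_iff.mp hu).2
  map_mul' a b := by
    show u * (a * b) * star u = u * a * star u * (u * b * star u)
    have h : star u * u = 1 := (Unitary.mem_iff.mp hu).1
    calc u * (a * b) * star u = u * a * (star u * u * (b * star u)) := by
          rw [h]; simp [mul_assoc]
    _ = u * a * star u * (u * b * star u) := by simp [mul_assoc]
  map_zero' := by simp
  map_add' a b := by
    show u * (a + b) * star u = u * a * star u + u * b * star u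
    noncomm_ring
  commutes' r := by
    show u * algebraMap ℂ (Matrix n n ℂ) r * star u = algebraMap ℂ (Matrix n n ℂ) r
    simp only [Algebra.algebraMap_eq_smul_one, mul_smul_comm, smul_mul_assoc, mul_one,
      (Unitary.mem_iff.mp hu).2]
  map_star' a := by
    show u * star a * star u = star (u * a * star u)
    simp [Matrix.star_mul, star_star, mul_assoc]

lemma conjSAH_cont (u : Matrix n n ℂ) (hu : u ∈ unitary (Matrix n n ℂ)) :
    Continuous (conjSAH u hu) := by
  show Continuous fun a => u * a * star u
  fun_prop

lemma mpow_unitary_conj {A : Matrix n n ℂ} (hA : A.PosDef) {u : Matrix n n ℂ}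
    (hu : u ∈ unitary (Matrix n n ℂ)) (p : ℝ) :
    mpow (u * A * star u) p = u * mpow A p * star u := by
  have h1 : (u * A * star u).IsHermitian := by
    rw [Matrix.star_eq_conjTranspose]
    exact (hA.posSemidef.mul_mul_conjTranspose_same u).1
  exact (StarAlgHomClass.map_cfc (conjSAH u hu) (fun x : ℝ => x ^ p) A
    (fun x hx => (Real.continuousAt_rpow_const x p
      (Or.inl (by
        rw [hA.isHermitian.spectrum_real_eq_range_eigenvalues] at hx
        obtain ⟨i, rfl⟩ := hx
        exact (hA.eigenvalues_pos i).ne'))).continuousWithinAt)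
    (conjSAH_cont u hu) hA.isHermitian h1).symm

lemma posDef_conj {A M : Matrix n n ℂ} (hA : A.PosDef) (hM : IsUnit M) :
    (M * A * star M).PosDef := by
  refine posDef_of_posSemidef_isUnit ?_ ((hM.mul hA.isUnit).mul (hM.star))
  rw [star_eq_conjTranspose]
  exact hA.posSemidef.mul_mul_conjTranspose_same M

lemma gm_key {M D : Matrix n n ℂ} (hD : D.PosDef) (hM : IsUnit M) (t : ℝ) :
    gm (M * star M) (M * D * star M) t = M * mpow D t * star M := by
  set A := M * star M with hA_def
  have hA : A.PosDef := by
    have := posDef_conj Matrix.PosDef.one hM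
    rwa [mul_one] at this
  have hAh := hA.isHermitian
  have hprod : mpow A (-(1 / 2)) * A * mpow A (-(1 / 2)) = 1 := by
    calc mpow A (-(1 / 2)) * A * mpow A (-(1 / 2))
        = mpow A (-(1 / 2)) * mpow A 1 * mpow A (-(1 / 2)) := by rw [mpow_one hAh]
    _ = mpow A (-(1 / 2) + 1 + -(1 / 2)) := by rw [mpow_mul_mpow hA, mpow_mul_mpow hA]
    _ = mpow A 0 := by norm_num
    _ = 1 := mpow_zero hAh
  set V := mpow A (-(1 / 2)) * M with hV_def
  have hVstar : star V = star M * mpow A (-(1 / 2)) := by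
    rw [hV_def, Matrix.star_mul, star_mpow]
  have hVV : V * star V = 1 := by
    rw [hV_def, hVstar]
    calc mpow A (-(1 / 2)) * M * (star M * mpow A (-(1 / 2)))
        = mpow A (-(1 / 2)) * A * mpow A (-(1 / 2)) := by rw [hA_def]; simp only [mul_assoc]
    _ = 1 := hprod
  have hVu : V ∈ unitary (Matrix n n ℂ) := ⟨mul_eq_one_comm.mp hVV, hVV⟩
  have hhalf : mpow A (1 / 2) * mpow A (-(1 / 2)) = 1 := by
    rw [mpow_mul_mpow hA]
    norm_num
    exact mpow_zero hAh
  have h4 : mpow A (1 / 2) * V = M := by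
    rw [hV_def, ← mul_assoc, hhalf, one_mul]
  have h5 : star V * mpow A (1 / 2) = star M := by
    rw [hVstar, mul_assoc, mul_eq_one_comm.mp hhalf, mul_one]
  have hinner : mpow A (-(1 / 2)) * (M * D * star M) * mpow A (-(1 / 2))
      = V * D * star V := by rw [hV_def, hVstar]; simp only [mul_assoc]
  rw [gm, hinner, mpow_unitary_conj hD hVu, ← mul_assoc, ← mul_assoc, h4, mul_assoc, h5]

end Aux

theorem stmt9 {n : Type*} [Fintype n] [DecidableEq n]
    (X Y : Matrix n n ℂ) (hX : X.PosDef) (hY : Y.PosDef) (t₀ t₁ t : ℝ) :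
    gm X Y ((1 - t) * t₀ + t * t₁) = gm (gm X Y t₀) (gm X Y t₁) t := by
  set C := mpow X (-(1 / 2)) * Y * mpow X (-(1 / 2)) with hC_def
  have hC : C.PosDef := by
    have h := posDef_conj hY (mpow_posDef hX (-(1 / 2))).isUnit
    rwa [star_mpow] at h
  set M := mpow X (1 / 2) * mpow C (t₀ / 2) with hM_def
  have hMu : IsUnit M := (mpow_posDef hX _).isUnit.mul (mpow_posDef hC _).isUnit
  have hMstar : star M = mpow C (t₀ / 2) * mpow X (1 / 2) := by
    rw [hM_def, Matrix.star_mul, star_mpow, star_mpow]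
  have gm_eq : ∀ s : ℝ, gm X Y s = mpow X (1 / 2) * mpow C s * mpow X (1 / 2) := fun s => rfl
  have e1 : M * star M = gm X Y t₀ := by
    rw [hMstar, hM_def, gm_eq]
    calc mpow X (1 / 2) * mpow C (t₀ / 2) * (mpow C (t₀ / 2) * mpow X (1 / 2))
        = mpow X (1 / 2) * (mpow C (t₀ / 2) * mpow C (t₀ / 2)) * mpow X (1 / 2) := by
          simp only [mul_assoc]
    _ = mpow X (1 / 2) * mpow C (t₀ / 2 + t₀ / 2) * mpow X (1 / 2) := by
          rw [mpow_mul_mpow hC]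
    _ = mpow X (1 / 2) * mpow C t₀ * mpow X (1 / 2) := by
          rw [show t₀ / 2 + t₀ / 2 = t₀ by ring]
  have e2 : M * mpow C (t₁ - t₀) * star M = gm X Y t₁ := by
    rw [hMstar, hM_def, gm_eq]
    calc mpow X (1 / 2) * mpow C (t₀ / 2) * mpow C (t₁ - t₀) * (mpow C (t₀ / 2) * mpow X (1 / 2))
        = mpow X (1 / 2) * (mpow C (t₀ / 2) * mpow C (t₁ - t₀) * mpow C (t₀ / 2))
            * mpow X (1 / 2) := by simp only [mul_assoc]
    _ = mpow X (1 / 2) * mpow C (t₀ / 2 + (t₁ - t₀) + t₀ / 2) * mpow X (1 / 2) := by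
          rw [mpow_mul_mpow hC, mpow_mul_mpow hC]
    _ = mpow X (1 / 2) * mpow C t₁ * mpow X (1 / 2) := by
          rw [show t₀ / 2 + (t₁ - t₀) + t₀ / 2 = t₁ by ring]
  have key := gm_key (mpow_posDef hC (t₁ - t₀)) hMu t
  rw [e1, e2, mpow_mpow hC] at key
  rw [key, hMstar, hM_def, gm_eq]
  calc mpow X (1 / 2) * mpow C ((1 - t) * t₀ + t * t₁) * mpow X (1 / 2)
      = mpow X (1 / 2) * mpow C (t₀ / 2 + ((t₁ - t₀) * t + t₀ / 2)) * mpow X (1 / 2) := by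
        rw [show t₀ / 2 + ((t₁ - t₀) * t + t₀ / 2) = (1 - t) * t₀ + t * t₁ by ring]
  _ = mpow X (1 / 2) * (mpow C (t₀ / 2) * (mpow C ((t₁ - t₀) * t) * mpow C (t₀ / 2)))
        * mpow X (1 / 2) := by rw [mpow_mul_mpow hC, mpow_mul_mpow hC]
  _ = mpow X (1 / 2) * mpow C (t₀ / 2) * mpow C ((t₁ - t₀) * t)
        * (mpow C (t₀ / 2) * mpow X (1 / 2)) := by simp only [mul_assoc]
end

section
/- Let R(X‖Y) be a function on P_n × P_n that is convex and lower semicontinuous in X and satisfies the scaling relation R(λX‖Y) = λ R(X‖Y) + λ log λ · Tr[X] + (1-λ) Tr[Y] for all λ > 0. Define Φ_R(H,Y) = sup{Tr[XH] − R(X‖Y) : X positive definite, Tr[X] = 1} and Ψ_R(H,Y) = sup{Tr[XH] − R(X‖Y) : X positive definite}. Then Ψ_R(H,Y) = exp(Φ_R(H,Y) + Tr[Y] − 1) − Tr[Y]. -/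
open Matrix ComplexOrder
open scoped ENNReal

section Aux

variable {n : Type*} [Fintype n] [DecidableEq n]

lemma real_smul_eq (l : ℝ) (X : Matrix n n ℂ) : l • X = (l : ℂ) • X := by
  ext i j; simp [Complex.real_smul]

lemma posdef_rsmul {X : Matrix n n ℂ} (hX : X.PosDef) {l : ℝ} (hl : 0 < l) :
    (l • X).PosDef := by
  rw [real_smul_eq]
  refine Matrix.PosDef.of_dotProduct_mulVec_pos ?_ fun x hx => ?_
  · unfold Matrix.IsHermitian
    rw [conjTranspose_smul, Complex.star_def, Complex.conj_ofReal, hX.1.eq]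
  · have h := hX.dotProduct_mulVec_pos hx
    calc (0:ℂ) < (l : ℂ) * (star x ⬝ᵥ X *ᵥ x) := by
          apply mul_pos _ h
          simpa using (Complex.zero_lt_real).2 hl
      _ = star x ⬝ᵥ ((l:ℂ) • X) *ᵥ x := by
          rw [smul_mulVec, dotProduct_smul, smul_eq_mul]

lemma herm_trace_re {X : Matrix n n ℂ} (hX : X.IsHermitian) : (rtr X : ℂ) = X.trace := by
  have : (starRingEnd ℂ) X.trace = X.trace := by
    calc (starRingEnd ℂ) X.trace = Xᴴ.trace := (trace_conjTranspose X).symm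
      _ = X.trace := by rw [hX.eq]
  exact Complex.conj_eq_iff_re.mp this

lemma rtr_pos [Nonempty n] {X : Matrix n n ℂ} (hX : X.PosDef) : 0 < rtr X := by
  have hdiag : ∀ i, 0 < (X i i).re := by
    intro i
    have h := hX.re_dotProduct_pos (x := Pi.single i 1) (by
      simp [Function.ne_iff])
    simpa [dotProduct, mulVec, Pi.single_apply, Finset.sum_ite_eq] using h
  have : rtr X = ∑ i, (X i i).re := by
    simp [rtr, Matrix.trace, Matrix.diag, Complex.re_sum]
  rw [this]
  exact Finset.sum_pos (fun i _ => hdiag i) Finset.univ_nonempty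

lemma key_ineq {l a : ℝ} (hl : 0 < l) : l * a - l * Real.log l ≤ Real.exp (a - 1) := by
  have h1 : a - Real.log l - 1 + 1 ≤ Real.exp (a - Real.log l - 1) := Real.add_one_le_exp _
  calc l * a - l * Real.log l = l * (a - Real.log l - 1 + 1) := by ring
    _ ≤ l * Real.exp (a - Real.log l - 1) := by
        exact mul_le_mul_of_nonneg_left h1 hl.le
    _ = Real.exp (a - 1) := by
        rw [show a - 1 = (a - Real.log l - 1) + Real.log l by ring, Real.exp_add,
          Real.exp_log hl, mul_comm]

lemma rtr_smul (l : ℝ) (X : Matrix n n ℂ) : rtr (l • X) = l * rtr X := by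
  simp [rtr, trace_smul, Complex.smul_re]

end Aux

theorem stmt11 {n : Type*} [Fintype n] [DecidableEq n]
    (R : Matrix n n ℂ → Matrix n n ℂ → ℝ) (Y H : Matrix n n ℂ)
    (hY : Y.PosDef) (hH : H.IsHermitian)
    (hconv : ConvexOn ℝ {X : Matrix n n ℂ | X.PosDef} (fun X => R X Y))
    (hlsc : LowerSemicontinuousOn (fun X => R X Y) {X : Matrix n n ℂ | X.PosDef})
    (hscale : ∀ (X : Matrix n n ℂ) (l : ℝ), 0 < l → X.PosDef →
      R (l • X) Y = l * R X Y + l * Real.log l * rtr X + (1 - l) * rtr Y) :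
    (⨆ X : {X : Matrix n n ℂ // X.PosDef}, ((rtr (X.1 * H) - R X.1 Y : ℝ) : EReal)) =
      (EReal.exp ((⨆ X : {X : Matrix n n ℂ // X.PosDef ∧ X.trace = 1},
          ((rtr (X.1 * H) - R X.1 Y : ℝ) : EReal)) + (rtr Y : EReal) - 1) : ℝ≥0∞) -
        (rtr Y : EReal) := by
  set T : ℝ := rtr Y with hT
  by_cases hne : Nonempty {X : Matrix n n ℂ // X.PosDef ∧ X.trace = 1}
  case neg =>
    haveI hsub2 : IsEmpty {X : Matrix n n ℂ // X.PosDef ∧ X.trace = 1} :=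
      not_nonempty_iff.mp hne
    haveI hE : IsEmpty n := by
      by_contra h
      rw [not_isEmpty_iff] at h
      have hcard : (0:ℝ) < (Fintype.card n : ℝ) := by
        exact_mod_cast Fintype.card_pos
      set c : ℝ := (Fintype.card n : ℝ)⁻¹ with hc
      have hpd : (c • (1 : Matrix n n ℂ)).PosDef :=
        posdef_rsmul Matrix.PosDef.one (inv_pos.mpr hcard)
      have htr : (c • (1 : Matrix n n ℂ)).trace = 1 := by
        rw [real_smul_eq, trace_smul, trace_one, smul_eq_mul, hc]
        push_cast
        rw [inv_mul_cancel₀]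
        exact_mod_cast hcard.ne'
      exact hne ⟨⟨c • 1, hpd, htr⟩⟩
    have hzero : ∀ A : Matrix n n ℂ, A = 0 := fun A => by
      ext i j; exact isEmptyElim i
    have htr0 : ∀ A : Matrix n n ℂ, rtr A = 0 := fun A => by
      simp [rtr, Matrix.trace, Finset.univ_eq_empty]
    have hpd0 : (0 : Matrix n n ℂ).PosDef := by
      refine Matrix.PosDef.of_dotProduct_mulVec_pos (by simp [Matrix.IsHermitian]) fun x hx => ?_
      exact absurd (funext fun i => isEmptyElim i) hx
    have hR0 : R 0 Y = 0 := by
      have h := hscale 0 2 (by norm_num) hpd0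
      have hT0 : T = 0 := hT.trans (htr0 Y)
      rw [smul_zero, htr0 0, hT0] at h
      linarith
    have hLHS : (⨆ X : {X : Matrix n n ℂ // X.PosDef},
        ((rtr (X.1 * H) - R X.1 Y : ℝ) : EReal)) = (0 : EReal) := by
      haveI : Nonempty {X : Matrix n n ℂ // X.PosDef} := ⟨⟨0, hpd0⟩⟩
      have : ∀ X : {X : Matrix n n ℂ // X.PosDef},
          ((rtr (X.1 * H) - R X.1 Y : ℝ) : EReal) = (0 : EReal) := by
        intro X
        have hX0 : X.1 = 0 := hzero X.1
        rw [hX0, zero_mul, htr0 0, hR0]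
        norm_num
      simp only [this, iSup_const]
    rw [hLHS, iSup_of_empty]
    have hT0 : T = 0 := hT.trans (htr0 Y)
    rw [hT0]
    have h1 : (⊥ : EReal) + ((0:ℝ) : EReal) - 1 = ⊥ := by
      rw [EReal.coe_zero, add_zero, EReal.bot_sub]
    rw [h1, EReal.exp_bot]
    simp
  case pos =>
    obtain ⟨⟨W, hWpd, hWtr⟩⟩ := hne
    haveI hnn : Nonempty n := by
      by_contra h
      haveI := not_nonempty_iff.mp h
      have : W.trace = 0 := by simp [Matrix.trace, Finset.univ_eq_empty]
      rw [hWtr] at this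
      exact one_ne_zero this
    set Φ : EReal := ⨆ X : {X : Matrix n n ℂ // X.PosDef ∧ X.trace = 1},
        ((rtr (X.1 * H) - R X.1 Y : ℝ) : EReal) with hΦ
    have hΦbot : Φ ≠ ⊥ := by
      have hle : ((rtr (W * H) - R W Y : ℝ) : EReal) ≤ Φ :=
        le_iSup (fun X : {X : Matrix n n ℂ // X.PosDef ∧ X.trace = 1} =>
          ((rtr (X.1 * H) - R X.1 Y : ℝ) : EReal)) ⟨W, hWpd, hWtr⟩
      intro hbot
      rw [hbot, le_bot_iff] at hle
      exact EReal.coe_ne_bot _ hle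
    have hmono : Φ ≤ ⨆ X : {X : Matrix n n ℂ // X.PosDef},
        ((rtr (X.1 * H) - R X.1 Y : ℝ) : EReal) := by
      refine iSup_le fun X => ?_
      exact le_iSup_of_le ⟨X.1, X.2.1⟩ le_rfl
    by_cases htop : Φ = ⊤
    case pos =>
      rw [htop]
      have h1 : (⊤ : EReal) + (T : EReal) - 1 = ⊤ := by
        rw [EReal.top_add_coe, ← EReal.coe_one, EReal.top_sub_coe]
      rw [h1, EReal.exp_top, EReal.coe_ennreal_top, EReal.top_sub_coe]
      exact top_unique (htop ▸ hmono)
    case neg =>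
      obtain ⟨φ, hφ⟩ : ∃ φ : ℝ, Φ = (φ : EReal) :=
        ⟨Φ.toReal, (EReal.coe_toReal htop hΦbot).symm⟩
      set r : ℝ := Real.exp (φ + T - 1) - T with hr
      have hRHS : (EReal.exp (Φ + (T : EReal) - 1) : ℝ≥0∞) - (T : EReal) = ((r : ℝ) : EReal) := by
        rw [hφ]
        rw [show ((φ:EReal) + (T:EReal) - 1) = ((φ + T - 1 : ℝ) : EReal) by norm_cast]
        rw [EReal.exp_coe, EReal.coe_ennreal_ofReal, max_eq_left (Real.exp_pos _).le]
        norm_cast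
      rw [hRHS]
      -- key scaling computation
      have hval : ∀ (X₀ : Matrix n n ℂ), X₀.PosDef → X₀.trace = 1 → ∀ l : ℝ, 0 < l →
          rtr ((l • X₀) * H) - R (l • X₀) Y
            = l * (rtr (X₀ * H) - R X₀ Y) - l * Real.log l + (l - 1) * T := by
        intro X₀ h0 htr1 l hl
        have htr1' : rtr X₀ = 1 := by
          simp [rtr, htr1]
        have h1 : rtr ((l • X₀) * H) = l * rtr (X₀ * H) := by
          rw [Matrix.smul_mul, rtr_smul]
        rw [h1, hscale X₀ l hl h0, htr1']
        ring
      refine le_antisymm ?_ ?_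
      · -- LHS ≤ r
        refine iSup_le fun X => ?_
        obtain ⟨Xm, hXpd⟩ := X
        set l : ℝ := rtr Xm with hl'
        have hl : 0 < l := rtr_pos hXpd
        set X₀ : Matrix n n ℂ := l⁻¹ • Xm with hX₀
        have hX₀pd : X₀.PosDef := posdef_rsmul hXpd (inv_pos.mpr hl)
        have htrX : Xm.trace = (l : ℂ) := (herm_trace_re hXpd.1).symm
        have htr₀ : X₀.trace = 1 := by
          rw [hX₀, real_smul_eq, trace_smul, htrX, smul_eq_mul]
          push_cast
          field_simp
        have hrecon : l • X₀ = Xm := by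
          rw [hX₀, smul_smul, mul_inv_cancel₀ hl.ne', one_smul]
        have hfle : rtr (X₀ * H) - R X₀ Y ≤ φ := by
          have := le_iSup (fun X : {X : Matrix n n ℂ // X.PosDef ∧ X.trace = 1} =>
            ((rtr (X.1 * H) - R X.1 Y : ℝ) : EReal)) ⟨X₀, hX₀pd, htr₀⟩
          rw [← hΦ, hφ] at this
          exact_mod_cast this
        have hcomp : rtr (Xm * H) - R Xm Y
            = l * (rtr (X₀ * H) - R X₀ Y) - l * Real.log l + (l - 1) * T := by
          rw [← hrecon]
          exact hval X₀ hX₀pd htr₀ l hl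
        have hkey : l * (φ + T) - l * Real.log l ≤ Real.exp (φ + T - 1) := key_ineq hl
        have : rtr (Xm * H) - R Xm Y ≤ r := by
          rw [hcomp, hr]
          have h2 : l * (rtr (X₀ * H) - R X₀ Y) ≤ l * φ :=
            mul_le_mul_of_nonneg_left hfle hl.le
          nlinarith [hkey, h2]
        exact_mod_cast this
      · -- r ≤ LHS
        have hstep : ∀ x : ℝ, x < φ →
            ((Real.exp (x + T - 1) - T : ℝ) : EReal) ≤
              ⨆ X : {X : Matrix n n ℂ // X.PosDef},
                ((rtr (X.1 * H) - R X.1 Y : ℝ) : EReal) := by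
          intro x hx
          have hxΦ : (x : EReal) < Φ := by rw [hφ]; exact_mod_cast hx
          rw [hΦ, lt_iSup_iff] at hxΦ
          obtain ⟨⟨X₀, hX₀pd, htr₀⟩, hX₀⟩ := hxΦ
          have hfx : x < rtr (X₀ * H) - R X₀ Y := by exact_mod_cast hX₀
          set b : ℝ := rtr (X₀ * H) - R X₀ Y + T with hb
          set l : ℝ := Real.exp (b - 1) with hldef
          have hl : 0 < l := Real.exp_pos _
          have hlog : Real.log l = b - 1 := by rw [hldef, Real.log_exp]
          have hXpd : (l • X₀).PosDef := posdef_rsmul hX₀pd hl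
          have hvall : rtr ((l • X₀) * H) - R (l • X₀) Y = Real.exp (b - 1) - T := by
            rw [hval X₀ hX₀pd htr₀ l hl, hlog, hb, ← hldef]
            ring
          have hle1 : ((Real.exp (b - 1) - T : ℝ) : EReal) ≤
              ⨆ X : {X : Matrix n n ℂ // X.PosDef},
                ((rtr (X.1 * H) - R X.1 Y : ℝ) : EReal) := by
            rw [← hvall]
            exact le_iSup (fun X : {X : Matrix n n ℂ // X.PosDef} =>
              ((rtr (X.1 * H) - R X.1 Y : ℝ) : EReal)) ⟨l • X₀, hXpd⟩
          refine le_trans ?_ hle1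
          have : Real.exp (x + T - 1) ≤ Real.exp (b - 1) := by
            apply Real.exp_le_exp.mpr
            rw [hb]
            linarith
          exact_mod_cast (by linarith : Real.exp (x + T - 1) - T ≤ Real.exp (b - 1) - T)
        have hcont : Filter.Tendsto (fun x : ℝ => ((Real.exp (x + T - 1) - T : ℝ) : EReal))
            (nhdsWithin φ (Set.Iio φ)) (nhds ((r : ℝ) : EReal)) := by
          have hc : Continuous fun x : ℝ => ((Real.exp (x + T - 1) - T : ℝ) : EReal) := by
            apply continuous_coe_real_ereal.comp
            continuity
          rw [hr]
          exact (hc.tendsto φ).mono_left nhdsWithin_le_nhds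
        exact le_of_tendsto hcont (Filter.eventually_of_mem self_mem_nhdsWithin
          fun x hx => hstep x hx)
end

section
/- Klein's inequality with equality condition: Let A, B be Hermitian n×n matrices and f a strictly convex differentiable function on an interval containing the spectra of A and B. Then Tr[f(B)] ≥ Tr[f(A)] + Tr[f'(A)(B−A)], with equality if and only if A = B. -/
open Matrix ComplexOrder

lemma rtr_def {n : Type*} [Fintype n] [DecidableEq n] (A : Matrix n n ℂ) :
    rtr A = A.trace.re := rfl

lemma my_conj_trace {n : Type*} [Fintype n] [DecidableEq n]
    (W Z : Matrix n n ℂ) (hW : star W * W = 1) : (W * Z * star W).trace = Z.trace := by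
  rw [Matrix.trace_mul_cycle, hW, one_mul]

lemma my_tangent_lt {S : Set ℝ} {f : ℝ → ℝ} (hf : StrictConvexOn ℝ S f)
    (hd : ∀ x ∈ S, DifferentiableAt ℝ f x) {x y : ℝ} (hx : x ∈ S) (hy : y ∈ S) (hxy : x ≠ y) :
    f x + deriv f x * (y - x) < f y := by
  rcases lt_or_gt_of_ne hxy with h | h
  · have h1 := hf.deriv_lt_slope hx hy h (hd x hx)
    rw [slope_def_field] at h1
    have h2 : 0 < y - x := sub_pos.2 h
    have := (lt_div_iff₀ h2).mp h1
    linarith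
  · have h1 := hf.slope_lt_deriv hy hx h (hd x hx)
    rw [slope_def_field] at h1
    have h2 : 0 < x - y := sub_pos.2 h
    have := (div_lt_iff₀ h2).mp h1
    nlinarith

lemma my_tangent_le {S : Set ℝ} {f : ℝ → ℝ} (hf : StrictConvexOn ℝ S f)
    (hd : ∀ x ∈ S, DifferentiableAt ℝ f x) {x y : ℝ} (hx : x ∈ S) (hy : y ∈ S) :
    f x + deriv f x * (y - x) ≤ f y := by
  rcases eq_or_ne x y with rfl | h
  · simp
  · exact (my_tangent_lt hf hd hx hy h).le

theorem stmt15 {n : Type*} [Fintype n] [DecidableEq n]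
    (A B : Matrix n n ℂ) (hA : A.IsHermitian) (hB : B.IsHermitian)
    (S : Set ℝ) (hS : S.OrdConnected)
    (hAS : spectrum ℝ A ⊆ S) (hBS : spectrum ℝ B ⊆ S)
    (f : ℝ → ℝ) (hf_conv : StrictConvexOn ℝ S f)
    (hf_diff : ∀ x ∈ S, DifferentiableAt ℝ f x) :
    rtr (cfc f A) + rtr (cfc (deriv f) A * (B - A)) ≤ rtr (cfc f B) ∧
      (rtr (cfc f B) = rtr (cfc f A) + rtr (cfc (deriv f) A * (B - A)) ↔ A = B) := by
  classical
  have haS : ∀ i, hA.eigenvalues i ∈ S := fun i => hAS (hA.eigenvalues_mem_spectrum_real i)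
  have hbS : ∀ j, hB.eigenvalues j ∈ S := fun j => hBS (hB.eigenvalues_mem_spectrum_real j)
  set U : Matrix n n ℂ := (hA.eigenvectorUnitary : Matrix n n ℂ) with hUdef
  set V : Matrix n n ℂ := (hB.eigenvectorUnitary : Matrix n n ℂ) with hVdef
  set a : n → ℝ := hA.eigenvalues with hadef
  set b : n → ℝ := hB.eigenvalues with hbdef
  have hU1 : star U * U = 1 := mem_unitaryGroup_iff'.mp (SetLike.coe_mem hA.eigenvectorUnitary)
  have hU2 : U * star U = 1 := mem_unitaryGroup_iff.mp (SetLike.coe_mem hA.eigenvectorUnitary)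
  have hV1 : star V * V = 1 := mem_unitaryGroup_iff'.mp (SetLike.coe_mem hB.eigenvectorUnitary)
  have hV2 : V * star V = 1 := mem_unitaryGroup_iff.mp (SetLike.coe_mem hB.eigenvectorUnitary)
  set M : Matrix n n ℂ := star U * V with hMdef
  have hMstar : star M = star V * U := by rw [hMdef, StarMul.star_mul, star_star]
  have hM1 : M * star M = 1 := by
    rw [hMstar, hMdef, mul_assoc, ← mul_assoc V, hV2, one_mul, hU1]
  have hM2 : star M * M = 1 := by
    rw [hMstar, hMdef, mul_assoc, ← mul_assoc U, hU2, one_mul, hV1]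
  set p : n → n → ℝ := fun i j => Complex.normSq (M i j) with hpdef
  have hp0 : ∀ i j, 0 ≤ p i j := fun i j => Complex.normSq_nonneg _
  -- row and column sums of p are 1
  have hrow : ∀ i, ∑ j, p i j = 1 := by
    intro i
    have h : (M * star M) i i = (1 : Matrix n n ℂ) i i := by rw [hM1]
    simp only [Matrix.mul_apply, Matrix.star_apply, Matrix.one_apply_eq,
      Complex.star_def, Complex.mul_conj] at h
    exact_mod_cast h
  have hcol : ∀ j, ∑ i, p i j = 1 := by
    intro j
    have h : (star M * M) j j = (1 : Matrix n n ℂ) j j := by rw [hM2]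
    simp only [Matrix.mul_apply, Matrix.star_apply, Matrix.one_apply_eq,
      Complex.star_def] at h
    have h2 : ∀ x, (starRingEnd ℂ) (M x j) * M x j = ((p x j : ℝ) : ℂ) := fun x => by
      rw [mul_comm, Complex.mul_conj]
    rw [Finset.sum_congr rfl fun x _ => h2 x] at h
    exact_mod_cast h
  -- entries of M * (diagonal d * star M)
  have entry : ∀ (d : n → ℂ) (i k : n), (M * (diagonal d * star M)) i k
      = ∑ j, M i j * d j * star (M k j) := by
    intro d i k
    simp [Matrix.mul_apply, Matrix.diagonal_apply, Matrix.star_apply, ite_mul, zero_mul,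
      Finset.sum_ite_eq, mul_assoc]
  -- trace of cfc
  have hTr : ∀ (g : ℝ → ℝ) (C : Matrix n n ℂ) (hC : C.IsHermitian),
      rtr (cfc g C) = ∑ i, g (hC.eigenvalues i) := by
    intro g C hC
    rw [hC.cfc_eq]
    unfold Matrix.IsHermitian.cfc
    rw [Unitary.conjStarAlgAut_apply]
    rw [rtr_def, my_conj_trace _ _ (mem_unitaryGroup_iff'.mp (SetLike.coe_mem _)),
      Matrix.trace_diagonal]
    rw [Complex.re_sum]
    simp
  have hco : (RCLike.ofReal : ℝ → ℂ) = Complex.ofReal := rfl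
  have hcont : ∀ (g : ℝ → ℝ) (C : Matrix n n ℂ), ContinuousOn g (spectrum ℝ C) := by
    intro g C
    rw [continuousOn_iff_continuous_restrict]
    exact continuous_of_discreteTopology
  -- mixed trace
  have hmix : ∀ g : ℝ → ℝ, rtr (cfc g A * B) = ∑ i, ∑ j, g (a i) * b j * p i j := by
    intro g
    rw [hA.cfc_eq]
    unfold Matrix.IsHermitian.cfc
    rw [Unitary.conjStarAlgAut_apply]
    rw [← hUdef, ← hadef]
    conv_lhs => rw [hB.spectral_theorem]
    rw [Unitary.conjStarAlgAut_apply]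
    rw [← hVdef, ← hbdef]
    have e1 : ((U * diagonal (RCLike.ofReal ∘ g ∘ a) * star U)
          * (V * diagonal (RCLike.ofReal ∘ b) * star V)).trace
        = (diagonal (RCLike.ofReal ∘ g ∘ a)
          * (M * (diagonal (RCLike.ofReal ∘ b) * star M))).trace := by
      rw [hMdef, hMstar]
      simp only [mul_assoc]
      rw [Matrix.trace_mul_comm]
      simp only [mul_assoc]
    rw [rtr_def, e1]
    have e2 : (diagonal (RCLike.ofReal ∘ g ∘ a)
          * (M * (diagonal (RCLike.ofReal ∘ b) * star M))).trace
        = ∑ i, (RCLike.ofReal (g (a i)) : ℂ)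
            * ∑ j, M i j * (RCLike.ofReal (b j) : ℂ) * star (M i j) := by
      unfold Matrix.trace
      refine Finset.sum_congr rfl fun i _ => ?_
      rw [Matrix.diag_apply, Matrix.diagonal_mul, entry]
      simp
    rw [e2, Complex.re_sum]
    refine Finset.sum_congr rfl fun i _ => ?_
    rw [Finset.mul_sum, Complex.re_sum]
    refine Finset.sum_congr rfl fun j _ => ?_
    simp only [hco, hpdef, Complex.star_def, Complex.mul_re, Complex.mul_im,
      Complex.conj_re, Complex.conj_im, Complex.ofReal_re, Complex.ofReal_im,
      Complex.normSq_apply]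
    ring
  -- trace of cfc g A * A
  have hAA : ∀ g : ℝ → ℝ, rtr (cfc g A * A) = ∑ i, g (a i) * a i := by
    intro g
    have h1 := cfc_mul (R := ℝ) g id A (hcont g A) (hcont id A)
    rw [cfc_id ℝ A] at h1
    rw [← h1, hTr _ A hA]
    simp
    rfl
  have hsub : rtr (cfc (deriv f) A * (B - A))
      = (∑ i, ∑ j, deriv f (a i) * b j * p i j) - ∑ i, deriv f (a i) * a i := by
    rw [mul_sub, rtr_def, Matrix.trace_sub, Complex.sub_re, ← rtr_def, ← rtr_def,
      hmix, hAA]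
  set T : n → n → ℝ := fun i j => f (b j) - f (a i) - deriv f (a i) * (b j - a i) with hTdef
  have hT0 : ∀ i j, 0 ≤ T i j := fun i j => by
    have := my_tangent_le hf_conv hf_diff (haS i) (hbS j)
    simp only [hTdef]
    linarith
  have key : rtr (cfc f B) - (rtr (cfc f A) + rtr (cfc (deriv f) A * (B - A)))
      = ∑ i, ∑ j, p i j * T i j := by
    rw [hTr f B hB, hTr f A hA, hsub]
    have h1 : ∑ j, f (b j) = ∑ i, ∑ j, p i j * f (b j) := by
      rw [Finset.sum_comm]
      exact Finset.sum_congr rfl fun j _ => by rw [← Finset.sum_mul, hcol j, one_mul]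
    have h2 : ∑ i, f (a i) = ∑ i, ∑ j, p i j * f (a i) :=
      Finset.sum_congr rfl fun i _ => by rw [← Finset.sum_mul, hrow i, one_mul]
    have h3 : ∑ i, deriv f (a i) * a i = ∑ i, ∑ j, p i j * (deriv f (a i) * a i) :=
      Finset.sum_congr rfl fun i _ => by rw [← Finset.sum_mul, hrow i, one_mul]
    rw [h1, h2, h3]
    simp only [← Finset.sum_sub_distrib, ← Finset.sum_add_distrib]
    exact Finset.sum_congr rfl fun i _ => Finset.sum_congr rfl fun j _ => by
      simp only [hTdef]; ring
  have hsum0 : 0 ≤ ∑ i, ∑ j, p i j * T i j :=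
    Finset.sum_nonneg fun i _ => Finset.sum_nonneg fun j _ =>
      mul_nonneg (hp0 i j) (hT0 i j)
  refine ⟨by linarith [key, hsum0], ?_, ?_⟩
  · intro h
    have hz : ∑ i, ∑ j, p i j * T i j = 0 := by rw [← key, h]; ring
    have hz2 : ∀ i j, p i j * T i j = 0 := by
      intro i j
      have hin := (Finset.sum_eq_zero_iff_of_nonneg (fun i _ =>
        Finset.sum_nonneg fun j _ => mul_nonneg (hp0 i j) (hT0 i j))).mp hz i
        (Finset.mem_univ i)
      exact (Finset.sum_eq_zero_iff_of_nonneg (fun j _ =>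
        mul_nonneg (hp0 i j) (hT0 i j))).mp hin j (Finset.mem_univ j)
    have hab : ∀ i j, M i j ≠ 0 → a i = b j := by
      intro i j hMij
      by_contra hne
      have hplt : 0 < p i j := Complex.normSq_pos.mpr hMij
      have hTlt : 0 < T i j := by
        have := my_tangent_lt hf_conv hf_diff (haS i) (hbS j) hne
        simp only [hTdef]
        linarith
      nlinarith [hz2 i j]
    have hDiag : M * (diagonal (RCLike.ofReal ∘ b) * star M)
        = diagonal (RCLike.ofReal ∘ a) := by
      ext i k
      rw [entry]
      have hterm2 : ∀ j, M i j * (RCLike.ofReal ∘ b) j * star (M k j)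
          = (RCLike.ofReal (a i) : ℂ) * (M i j * star (M k j)) := by
        intro j
        rcases eq_or_ne (M i j) 0 with h0 | h0
        · simp [h0]
        · simp only [Function.comp_apply]
          rw [show ((RCLike.ofReal (b j) : ℂ)) = (RCLike.ofReal (a i) : ℂ) from by
            rw [hab i j h0]]
          ring
      rw [Finset.sum_congr rfl fun j _ => hterm2 j, ← Finset.mul_sum]
      have hMM : ∑ j, M i j * star (M k j) = (1 : Matrix n n ℂ) i k := by
        have h9 : (M * star M) i k = (1 : Matrix n n ℂ) i k := by rw [hM1]
        simpa [Matrix.mul_apply, Matrix.star_apply] using h9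
      rw [hMM]
      rcases eq_or_ne i k with rfl | hik
      · simp
      · simp [Matrix.one_apply_ne hik, Matrix.diagonal_apply_ne _ hik]
    calc A = U * diagonal (RCLike.ofReal ∘ a) * star U := by
          have := hA.spectral_theorem; rwa [Unitary.conjStarAlgAut_apply] at this
      _ = U * (M * (diagonal (RCLike.ofReal ∘ b) * star M)) * star U := by rw [hDiag]
      _ = V * (diagonal (RCLike.ofReal ∘ b) * star V) := by
            rw [hMdef, hMstar]
            simp only [mul_assoc]
            rw [hU2, mul_one, ← mul_assoc, hU2, one_mul]
      _ = B := by rw [← mul_assoc]; have := hB.spectral_theorem; rw [Unitary.conjStarAlgAut_apply] at this; exact this.symm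
  · intro h
    rw [← h]
    simp [rtr_def]
end

section
/- Let Φ : M_n → M_n be a linear map that is positive (Φ(A) ≥ 0 whenever A ≥ 0), unital (Φ(I) = I), and trace preserving. Then for every Hermitian X, the eigenvalue sequence of Φ(X) (in decreasing order) is majorized by the eigenvalue sequence of X. -/
open Matrix ComplexOrder

section Aux
set_option linter.unusedSectionVars false

variable {n : Type*} [Fintype n] [DecidableEq n]
open scoped MatrixOrder

noncomputable def Ediag (j : n) : Matrix n n ℂ := diagonal (Pi.single j 1)

lemma Ediag_mul_Ediag (j : n) : Ediag j * Ediag j = Ediag j := by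
  have h : (fun i => (Pi.single j 1 : n → ℂ) i * (Pi.single j 1 : n → ℂ) i)
      = (Pi.single j 1 : n → ℂ) := by
    funext i; by_cases h : i = j <;> simp [h, Pi.single_apply]
  simp only [Ediag, diagonal_mul_diagonal, h]

lemma Ediag_conjTranspose (j : n) : (Ediag j)ᴴ = Ediag j := by
  have h : (star (Pi.single j 1 : n → ℂ)) = (Pi.single j 1 : n → ℂ) := by
    funext i; by_cases h : i = j <;> simp [h, Pi.single_apply]
  simp only [Ediag, diagonal_conjTranspose, h]

lemma sum_Ediag : ∑ j, (Ediag j : Matrix n n ℂ) = 1 := by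
  ext i k
  by_cases h : i = k <;>
    simp [Ediag, Matrix.sum_apply, diagonal_apply, Pi.single_apply, one_apply, h]

lemma trace_Ediag_mul_diagonal (j : n) (d : n → ℂ) :
    (Ediag j * diagonal d).trace = d j := by
  simp [Ediag, diagonal_mul_diagonal, trace_diagonal, Pi.single_apply, ite_mul]

lemma trace_Ediag (j : n) : (Ediag j : Matrix n n ℂ).trace = 1 := by
  simp [Ediag, trace_diagonal, Pi.single_apply]

noncomputable def Pmat (U : Matrix n n ℂ) (j : n) : Matrix n n ℂ := U * Ediag j * Uᴴ

lemma Pmat_posSemidef (U : Matrix n n ℂ) (j : n) : (Pmat U j).PosSemidef := by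
  have : Pmat U j = (U * Ediag j) * (U * Ediag j)ᴴ := by
    rw [conjTranspose_mul, Ediag_conjTranspose, Pmat, Matrix.mul_assoc, Matrix.mul_assoc,
      ← Matrix.mul_assoc (Ediag j), Ediag_mul_Ediag]
  rw [this]
  exact posSemidef_self_mul_conjTranspose _

lemma trace_Pmat {U : Matrix n n ℂ} (hU : Uᴴ * U = 1) (j : n) : (Pmat U j).trace = 1 := by
  rw [Pmat, trace_mul_cycle, hU, Matrix.one_mul, trace_Ediag]

lemma sum_Pmat {U : Matrix n n ℂ} (hU : U * Uᴴ = 1) : ∑ j, Pmat U j = 1 := by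
  have : ∑ j, Pmat U j = U * (∑ j, (Ediag j : Matrix n n ℂ)) * Uᴴ := by
    rw [Matrix.mul_sum, Finset.sum_mul]; rfl
  rw [this, sum_Ediag, Matrix.mul_one, hU]

lemma trace_psd_nonneg {M : Matrix n n ℂ} (hM : M.PosSemidef) : 0 ≤ M.trace := by
  rw [trace]
  apply Finset.sum_nonneg
  intro i _
  exact hM.diag_nonneg

lemma trace_mul_psd_nonneg {A B : Matrix n n ℂ} (hA : A.PosSemidef) (hB : B.PosSemidef) :
    0 ≤ (A * B).trace := by
  have hs : CFC.sqrt A * CFC.sqrt A = A := CFC.sqrt_mul_sqrt_self A hA.nonneg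
  have h1 : (CFC.sqrt A * B * CFC.sqrt A).trace = (A * B).trace := by
    rw [trace_mul_cycle, hs]
  have h2 : (CFC.sqrt A * B * CFC.sqrt A).PosSemidef := by
    have := hB.mul_mul_conjTranspose_same (CFC.sqrt A)
    rwa [(CFC.sqrt_nonneg A).posSemidef.isHermitian.eq] at this
  rw [← h1]; exact trace_psd_nonneg h2

lemma diagonal_eq_sum_smul (d : n → ℝ) :
    diagonal ((fun r : ℝ => (r : ℂ)) ∘ d) = ∑ j, (d j : ℂ) • Ediag j := by
  ext i k
  by_cases h : i = k <;>
    simp [Ediag, Matrix.sum_apply, diagonal_apply, Pi.single_apply, h]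

lemma conj_diagonal_eq_sum (U : Matrix n n ℂ) (d : n → ℝ) :
    U * diagonal ((fun r : ℝ => (r : ℂ)) ∘ d) * Uᴴ = ∑ j, (d j : ℂ) • Pmat U j := by
  rw [diagonal_eq_sum_smul, Matrix.mul_sum, Finset.sum_mul]
  refine Finset.sum_congr rfl fun j _ => ?_
  rw [Matrix.mul_smul, Matrix.smul_mul, Pmat]

lemma spectral_sum {X : Matrix n n ℂ} (hX : X.IsHermitian) :
    X = ∑ j, (hX.eigenvalues j : ℂ) • Pmat (hX.eigenvectorUnitary : Matrix n n ℂ) j := by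
  rw [← conj_diagonal_eq_sum]
  have := hX.spectral_theorem
  simp only [Unitary.conjStarAlgAut_apply, Unitary.coe_star, Matrix.star_eq_conjTranspose] at this
  exact this

lemma trace_Pmat_mul {U : Matrix n n ℂ} (hU : Uᴴ * U = 1) (d : n → ℂ) (i : n) :
    (Pmat U i * (U * diagonal d * Uᴴ)).trace = d i := by
  have key : Uᴴ * (U * (diagonal d * Uᴴ)) = diagonal d * Uᴴ := by
    rw [← Matrix.mul_assoc, hU, Matrix.one_mul]
  rw [Pmat]
  simp only [Matrix.mul_assoc]
  rw [key, ← Matrix.mul_assoc, ← Matrix.mul_assoc, trace_mul_cycle, ← Matrix.mul_assoc,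
    hU, Matrix.one_mul, trace_Ediag_mul_diagonal]

lemma posSemidef_sum (s : Finset n) (f : n → Matrix n n ℂ) (hf : ∀ i ∈ s, (f i).PosSemidef) :
    (∑ i ∈ s, f i).PosSemidef :=
  Finset.sum_induction f _ (fun _ _ ha hb => ha.add hb) PosSemidef.zero hf

lemma lp_bound (lam r : n → ℝ) (h0 : ∀ j, 0 ≤ r j) (h1 : ∀ j, r j ≤ 1) (k : ℕ)
    (hsum : ∑ j, r j = k) :
    ∃ t : Finset n, t.card = k ∧ ∑ j, lam j * r j ≤ ∑ j ∈ t, lam j := by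
  have hkcard : k ≤ Fintype.card n := by
    have : (k : ℝ) ≤ Fintype.card n := by
      rw [← hsum]
      calc ∑ j, r j ≤ ∑ j : n, (1:ℝ) := Finset.sum_le_sum fun j _ => h1 j
        _ = Fintype.card n := by simp
    exact_mod_cast this
  rcases Nat.eq_zero_or_pos k with hk0 | hkpos
  · subst hk0
    have hr0 : ∀ j ∈ Finset.univ, r j = 0 := by
      rw [← Finset.sum_eq_zero_iff_of_nonneg (fun j _ => h0 j)]
      simpa using hsum
    refine ⟨∅, rfl, ?_⟩
    simp only [Finset.sum_empty]
    apply le_of_eq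
    apply Finset.sum_eq_zero
    intro j _
    rw [hr0 j (Finset.mem_univ j), mul_zero]
  · -- choose t of card k maximizing ∑ lam
    have hne : ((Finset.univ : Finset n).powersetCard k).Nonempty := by
      apply Finset.powersetCard_nonempty.mpr
      simpa using hkcard
    obtain ⟨t, htmem, htmax⟩ := Finset.exists_max_image _ (fun t => ∑ j ∈ t, lam j) hne
    have htcard : t.card = k := (Finset.mem_powersetCard.mp htmem).2
    have htne : t.Nonempty := Finset.card_pos.mp (htcard ▸ hkpos)
    obtain ⟨j0, hj0t, hj0min⟩ := Finset.exists_min_image t lam htne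
    set m := lam j0 with hm
    -- all entries off t are ≤ m
    have hoff : ∀ j ∉ t, lam j ≤ m := by
      intro j hjt
      by_contra hlt
      push_neg at hlt
      have hjerase : j ∉ t.erase j0 := fun h => hjt (Finset.mem_of_mem_erase h)
      set t' := insert j (t.erase j0) with ht'
      have ht'card : t'.card = k := by
        rw [ht', Finset.card_insert_of_notMem hjerase, Finset.card_erase_of_mem hj0t, htcard]
        omega
      have ht'mem : t' ∈ (Finset.univ : Finset n).powersetCard k :=
        Finset.mem_powersetCard.mpr ⟨Finset.subset_univ _, ht'card⟩
      have hsum' : ∑ i ∈ t, lam i < ∑ i ∈ t', lam i := by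
        rw [ht', Finset.sum_insert hjerase]
        have : ∑ i ∈ t.erase j0, lam i = ∑ i ∈ t, lam i - lam j0 := by
          rw [← Finset.add_sum_erase t lam hj0t]; ring
        rw [this]; linarith
      exact absurd (htmax t' ht'mem) (not_le.mpr hsum')
    refine ⟨t, htcard, ?_⟩
    have hsplit : ∑ j, lam j * r j = ∑ j ∈ t, lam j * r j + ∑ j ∈ tᶜ, lam j * r j :=
      (Finset.sum_add_sum_compl t _).symm
    have hcompl_r : ∑ j ∈ tᶜ, r j = ∑ j ∈ t, (1 - r j) := by
      have h1' : ∑ j ∈ t, r j + ∑ j ∈ tᶜ, r j = (k:ℝ) := by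
        rw [Finset.sum_add_sum_compl, hsum]
      have h2' : ∑ j ∈ t, (1 - r j) = (k:ℝ) - ∑ j ∈ t, r j := by
        rw [Finset.sum_sub_distrib]
        simp [htcard]
      linarith
    have step1 : ∑ j ∈ tᶜ, lam j * r j ≤ m * ∑ j ∈ tᶜ, r j := by
      rw [Finset.mul_sum]
      apply Finset.sum_le_sum
      intro j hj
      exact mul_le_mul_of_nonneg_right (hoff j (Finset.mem_compl.mp hj)) (h0 j)
    have step2 : m * ∑ j ∈ tᶜ, r j ≤ ∑ j ∈ t, lam j * (1 - r j) := by
      rw [hcompl_r, Finset.mul_sum]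
      apply Finset.sum_le_sum
      intro j hj
      exact mul_le_mul_of_nonneg_right (hj0min j hj) (by linarith [h1 j])
    calc ∑ j, lam j * r j
        = ∑ j ∈ t, lam j * r j + ∑ j ∈ tᶜ, lam j * r j := hsplit
      _ ≤ ∑ j ∈ t, lam j * r j + ∑ j ∈ t, lam j * (1 - r j) := by linarith
      _ = ∑ j ∈ t, lam j := by rw [← Finset.sum_add_distrib]; apply Finset.sum_congr rfl; intros; ring


end Aux

/-- `x` is majorized by `y`: every partial sum of entries of `x` is dominated by a sum of
equally many entries of `y`, and the total sums agree.  (This is equivalent to the usual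
definition via decreasing rearrangements.) -/
def Majorizes {n : Type*} [Fintype n] (x y : n → ℝ) : Prop :=
  (∀ s : Finset n, ∃ t : Finset n, t.card = s.card ∧ ∑ i ∈ s, x i ≤ ∑ i ∈ t, y i) ∧
    ∑ i, x i = ∑ i, y i

theorem stmt16 {n : Type*} [Fintype n] [DecidableEq n]
    (Φ : Matrix n n ℂ →ₗ[ℂ] Matrix n n ℂ)
    (hpos : ∀ A : Matrix n n ℂ, A.PosSemidef → (Φ A).PosSemidef)
    (hunital : Φ 1 = 1)
    (htr : ∀ A : Matrix n n ℂ, (Φ A).trace = A.trace)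
    (X : Matrix n n ℂ) (hX : X.IsHermitian) :
    ∀ hΦX : (Φ X).IsHermitian, Majorizes hΦX.eigenvalues hX.eigenvalues := by
  intro hY
  set U : Matrix n n ℂ := (hX.eigenvectorUnitary : Matrix n n ℂ) with hUdef
  set V : Matrix n n ℂ := (hY.eigenvectorUnitary : Matrix n n ℂ) with hVdef
  set lam : n → ℝ := hX.eigenvalues with hlamdef
  set mu : n → ℝ := hY.eigenvalues with hmudef
  have hU1 : Uᴴ * U = 1 := by
    have := (Matrix.mem_unitaryGroup_iff').mp hX.eigenvectorUnitary.2
    rwa [Matrix.star_eq_conjTranspose] at this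
  have hU2 : U * Uᴴ = 1 := by
    have := (Matrix.mem_unitaryGroup_iff).mp hX.eigenvectorUnitary.2
    rwa [Matrix.star_eq_conjTranspose] at this
  have hV1 : Vᴴ * V = 1 := by
    have := (Matrix.mem_unitaryGroup_iff').mp hY.eigenvectorUnitary.2
    rwa [Matrix.star_eq_conjTranspose] at this
  have hV2 : V * Vᴴ = 1 := by
    have := (Matrix.mem_unitaryGroup_iff).mp hY.eigenvectorUnitary.2
    rwa [Matrix.star_eq_conjTranspose] at this
  have hXdecomp : X = ∑ j, (lam j : ℂ) • Pmat U j := spectral_sum hX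
  have hYspec : Φ X = V * diagonal ((fun r : ℝ => (r : ℂ)) ∘ mu) * Vᴴ := by
    have := hY.spectral_theorem
    simp only [Unitary.conjStarAlgAut_apply, Unitary.coe_star, Matrix.star_eq_conjTranspose] at this
    exact this
  -- trace identities
  have htraceX : X.trace = ∑ j, (lam j : ℂ) := by
    rw [hXdecomp, trace_sum]
    refine Finset.sum_congr rfl fun j _ => ?_
    rw [trace_smul, trace_Pmat hU1, smul_eq_mul, mul_one]
  have htraceY : (Φ X).trace = ∑ j, (mu j : ℂ) := by
    have h1 : (Φ X).trace = ∑ j, (mu j : ℂ) • (Pmat V j).trace := by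
      conv_lhs => rw [show Φ X = ∑ j, (mu j : ℂ) • Pmat V j from by
        rw [← conj_diagonal_eq_sum]; exact hYspec]
      rw [trace_sum]
      exact Finset.sum_congr rfl fun j _ => trace_smul _ _
    rw [h1]
    refine Finset.sum_congr rfl fun j _ => ?_
    rw [trace_Pmat hV1, smul_eq_mul, mul_one]
  constructor
  · -- partial sums
    intro s
    set Q : Matrix n n ℂ := ∑ i ∈ s, Pmat V i with hQdef
    have hQpsd : Q.PosSemidef := posSemidef_sum s _ fun i _ => Pmat_posSemidef V i
    have hQ1psd : (1 - Q).PosSemidef := by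
      have hsplit : Q + ∑ i ∈ sᶜ, Pmat V i = 1 := by
        rw [hQdef, Finset.sum_add_sum_compl, sum_Pmat hV2]
      have : (1 : Matrix n n ℂ) - Q = ∑ i ∈ sᶜ, Pmat V i := by
        rw [← hsplit, add_sub_cancel_left]
      rw [this]
      exact posSemidef_sum _ _ fun i _ => Pmat_posSemidef V i
    have htrQ : Q.trace = (s.card : ℂ) := by
      rw [hQdef, trace_sum]
      rw [Finset.sum_congr rfl fun i _ => trace_Pmat hV1 i]
      simp
    have htrQY : (Q * Φ X).trace = ∑ i ∈ s, (mu i : ℂ) := by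
      rw [hQdef, Finset.sum_mul, trace_sum]
      refine Finset.sum_congr rfl fun i _ => ?_
      rw [hYspec, trace_Pmat_mul hV1]
      simp
    set cC : n → ℂ := fun j => (Q * Φ (Pmat U j)).trace with hcCdef
    have hc0 : ∀ j, 0 ≤ cC j := fun j =>
      trace_mul_psd_nonneg hQpsd (hpos _ (Pmat_posSemidef U j))
    have hc1 : ∀ j, cC j ≤ 1 := by
      intro j
      have hnn := trace_mul_psd_nonneg hQ1psd (hpos _ (Pmat_posSemidef U j))
      have hexp : ((1 - Q) * Φ (Pmat U j)).trace = 1 - cC j := by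
        rw [sub_mul, Matrix.one_mul, trace_sub, htr, trace_Pmat hU1]
      rw [hexp] at hnn
      exact sub_nonneg.mp hnn
    have hcsum : ∑ j, cC j = (s.card : ℂ) := by
      have : ∑ j, cC j = (Q * Φ (∑ j, Pmat U j)).trace := by
        rw [map_sum, Matrix.mul_sum, trace_sum]
      rw [this, sum_Pmat hU2, hunital, Matrix.mul_one, htrQ]
    have hwsum : ∑ j, (lam j : ℂ) * cC j = ∑ i ∈ s, (mu i : ℂ) := by
      have h1 : Φ X = ∑ j, (lam j : ℂ) • Φ (Pmat U j) := by
        conv_lhs => rw [hXdecomp]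
        rw [map_sum]
        exact Finset.sum_congr rfl fun j _ => (Φ.map_smul _ _)
      have h2 : (Q * Φ X).trace = ∑ j, (lam j : ℂ) * cC j := by
        rw [h1, Matrix.mul_sum]
        rw [trace_sum]
        refine Finset.sum_congr rfl fun j _ => ?_
        rw [Matrix.mul_smul, trace_smul, smul_eq_mul]
      rw [← h2, htrQY]
    -- pass to real values
    set r : n → ℝ := fun j => (cC j).re with hrdef
    have him : ∀ j, (cC j).im = 0 := fun j => ((Complex.nonneg_iff).mp (hc0 j)).2.symm
    have hcreal : ∀ j, cC j = (r j : ℂ) := fun j => by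
      apply Complex.ext <;> simp [hrdef, him j]
    have hr0 : ∀ j, 0 ≤ r j := fun j => ((Complex.nonneg_iff).mp (hc0 j)).1
    have hr1 : ∀ j, r j ≤ 1 := fun j => by
      have := (Complex.le_def).mp (hc1 j)
      simpa using this.1
    have hrsum : ∑ j, r j = (s.card : ℝ) := by
      have : ((∑ j, r j : ℝ) : ℂ) = ((s.card : ℝ) : ℂ) := by
        push_cast
        rw [← hcsum]
        exact Finset.sum_congr rfl fun j _ => (hcreal j).symm
      exact_mod_cast this
    have hrwsum : ∑ j, lam j * r j = ∑ i ∈ s, mu i := by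
      have : ((∑ j, lam j * r j : ℝ) : ℂ) = ((∑ i ∈ s, mu i : ℝ) : ℂ) := by
        push_cast
        rw [← hwsum]
        exact Finset.sum_congr rfl fun j _ => by rw [hcreal j]
      exact_mod_cast this
    obtain ⟨t, htcard, htle⟩ := lp_bound lam r hr0 hr1 s.card hrsum
    exact ⟨t, htcard, by rw [← hrwsum]; exact htle⟩
  · -- total sums
    have : (∑ j, (mu j : ℂ)) = ∑ j, (lam j : ℂ) := by
      rw [← htraceX, ← htraceY, htr]
    have h2 : ((∑ j, mu j : ℝ) : ℂ) = ((∑ j, lam j : ℝ) : ℂ) := by push_cast; exact this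
    exact_mod_cast h2
end

section
/- The map (A,B) ↦ (A⁻¹ + B⁻¹)⁻¹ is jointly operator concave on pairs of positive definite n×n matrices; equivalently, for positive definite A₁, A₂, B₁, B₂ and t ∈ [0,1], ((((1-t)A₁+tA₂)⁻¹ + ((1-t)B₁+tB₂)⁻¹)⁻¹ ≥ (1-t)(A₁⁻¹+B₁⁻¹)⁻¹ + t(A₂⁻¹+B₂⁻¹)⁻¹ in the Loewner order. -/
open Matrix ComplexOrder

section aux

variable {n : Type*} [Fintype n] [DecidableEq n]

lemma smulPSD {c : ℝ} (hc : 0 ≤ c) {M : Matrix n n ℂ} (hM : M.PosSemidef) :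
    (c • M).PosSemidef := by
  refine posSemidef_iff_dotProduct_mulVec.mpr ⟨?_, fun x => ?_⟩
  · unfold Matrix.IsHermitian
    rw [conjTranspose_smul, star_trivial, hM.1]
  · have := (posSemidef_iff_dotProduct_mulVec.mp hM).2 x
    rw [Matrix.smul_mulVec, dotProduct_smul]
    rw [Complex.real_smul]
    exact mul_nonneg (by exact_mod_cast hc) this

lemma smulPD {c : ℝ} (hc : 0 < c) {M : Matrix n n ℂ} (hM : M.PosDef) :
    (c • M).PosDef := by
  refine posDef_iff_dotProduct_mulVec.mpr ⟨?_, fun x hx => ?_⟩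
  · unfold Matrix.IsHermitian
    rw [conjTranspose_smul, star_trivial, hM.1]
  · have := (posDef_iff_dotProduct_mulVec.mp hM).2 hx
    rw [Matrix.smul_mulVec, dotProduct_smul]
    rw [Complex.real_smul]
    exact mul_pos (by exact_mod_cast hc) this

lemma convPD {t : ℝ} (ht : t ∈ Set.Icc (0:ℝ) 1) {A B : Matrix n n ℂ}
    (hA : A.PosDef) (hB : B.PosDef) : ((1 - t) • A + t • B).PosDef := by
  rcases lt_or_eq_of_le ht.2 with h | h
  · exact (smulPD (by linarith) hA).add_posSemidef (smulPSD ht.1 hB.posSemidef)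
  · subst h; simpa using hB
end aux

section key

variable {n : Type*} [Fintype n] [DecidableEq n]

lemma parEq {A B : Matrix n n ℂ} (hA : A.PosDef) (hB : B.PosDef) :
    (A⁻¹ + B⁻¹)⁻¹ = B - B * (A + B)⁻¹ * B := by
  have hS : (A + B).PosDef := hA.add hB
  have hdS : IsUnit (A + B).det := (Matrix.isUnit_iff_isUnit_det _).mp hS.isUnit
  have hdA : IsUnit A.det := (Matrix.isUnit_iff_isUnit_det _).mp hA.isUnit
  have hdB : IsUnit B.det := (Matrix.isUnit_iff_isUnit_det _).mp hB.isUnit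
  have h1 : A⁻¹ + B⁻¹ = A⁻¹ * (A + B) * B⁻¹ := by
    rw [Matrix.mul_add, Matrix.add_mul, Matrix.nonsing_inv_mul A hdA, Matrix.one_mul,
      Matrix.mul_assoc, Matrix.mul_nonsing_inv B hdB, Matrix.mul_one, add_comm]
  rw [h1, Matrix.mul_inv_rev, Matrix.mul_inv_rev, Matrix.nonsing_inv_nonsing_inv A hdA,
    Matrix.nonsing_inv_nonsing_inv B hdB]
  simp only [← Matrix.mul_assoc]
  have : B * (A + B)⁻¹ * A = B * (A + B)⁻¹ * ((A + B) - B) := by noncomm_ring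
  rw [this, Matrix.mul_sub, Matrix.mul_assoc B, Matrix.nonsing_inv_mul _ hdS, Matrix.mul_one]

lemma keyIneq {A B : Matrix n n ℂ} (hA : A.PosDef) (hB : B.PosDef) (Y : Matrix n n ℂ) :
    (Yᴴ * A * Y + (1 - Y)ᴴ * B * (1 - Y) - (A⁻¹ + B⁻¹)⁻¹).PosSemidef := by
  set S := A + B with hSdef
  have hS : S.PosDef := hA.add hB
  have hdS : IsUnit S.det := (Matrix.isUnit_iff_isUnit_det _).mp hS.isUnit
  have h1 : S⁻¹ * S = 1 := Matrix.nonsing_inv_mul _ hdS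
  have h2 : S * S⁻¹ = 1 := Matrix.mul_nonsing_inv _ hdS
  have h3 : (S⁻¹)ᴴ = S⁻¹ := by rw [Matrix.conjTranspose_nonsing_inv, hS.1]
  have e1 : ∀ X : Matrix n n ℂ, S * (S⁻¹ * X) = X := fun X => by
    rw [← Matrix.mul_assoc, h2, Matrix.one_mul]
  have e2 : ∀ X : Matrix n n ℂ, S⁻¹ * (S * X) = X := fun X => by
    rw [← Matrix.mul_assoc, h1, Matrix.one_mul]
  have hAS : A = S - B := by rw [hSdef]; noncomm_ring
  have key : Yᴴ * A * Y + (1 - Y)ᴴ * B * (1 - Y) - (A⁻¹ + B⁻¹)⁻¹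
      = (Y - S⁻¹ * B)ᴴ * S * (Y - S⁻¹ * B) := by
    rw [parEq hA hB, ← hSdef]
    nth_rewrite 1 [hAS]
    simp only [conjTranspose_sub, conjTranspose_mul, conjTranspose_one, h3, hB.1.eq,
      Matrix.sub_mul, Matrix.mul_sub, Matrix.one_mul, Matrix.mul_one, Matrix.mul_assoc, e1, e2]
    abel
  rw [key]
  exact hS.posSemidef.conjTranspose_mul_mul_same _

end key

theorem stmt18 {n : Type*} [Fintype n] [DecidableEq n]
    (A₁ A₂ B₁ B₂ : Matrix n n ℂ) (hA₁ : A₁.PosDef) (hA₂ : A₂.PosDef)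
    (hB₁ : B₁.PosDef) (hB₂ : B₂.PosDef) (t : ℝ) (ht : t ∈ Set.Icc (0 : ℝ) 1) :
    ((((1 - t) • A₁ + t • A₂)⁻¹ + ((1 - t) • B₁ + t • B₂)⁻¹)⁻¹ -
      ((1 - t) • (A₁⁻¹ + B₁⁻¹)⁻¹ + t • (A₂⁻¹ + B₂⁻¹)⁻¹)).PosSemidef := by
  set At := (1 - t) • A₁ + t • A₂ with hAt
  set Bt := (1 - t) • B₁ + t • B₂ with hBt
  have hAtP : At.PosDef := convPD ht hA₁ hA₂
  have hBtP : Bt.PosDef := convPD ht hB₁ hB₂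
  set S := At + Bt with hSdef
  have hS : S.PosDef := hAtP.add hBtP
  have hdS : IsUnit S.det := (Matrix.isUnit_iff_isUnit_det _).mp hS.isUnit
  set Y := S⁻¹ * Bt with hY
  -- equality for the convex combination
  have hzero : Y - S⁻¹ * Bt = 0 := by rw [hY, sub_self]
  have hkeyt := keyIneq hAtP hBtP Y
  have heq : (At⁻¹ + Bt⁻¹)⁻¹ = Yᴴ * At * Y + (1 - Y)ᴴ * Bt * (1 - Y) := by
    have h1 : S⁻¹ * S = 1 := Matrix.nonsing_inv_mul _ hdS
    have h2 : S * S⁻¹ = 1 := Matrix.mul_nonsing_inv _ hdS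
    have h3 : (S⁻¹)ᴴ = S⁻¹ := by rw [Matrix.conjTranspose_nonsing_inv, hS.1]
    have e1 : ∀ X : Matrix n n ℂ, S * (S⁻¹ * X) = X := fun X => by
      rw [← Matrix.mul_assoc, h2, Matrix.one_mul]
    have e2 : ∀ X : Matrix n n ℂ, S⁻¹ * (S * X) = X := fun X => by
      rw [← Matrix.mul_assoc, h1, Matrix.one_mul]
    have hAS : At = S - Bt := by rw [hSdef]; noncomm_ring
    have key : Yᴴ * At * Y + (1 - Y)ᴴ * Bt * (1 - Y) - (At⁻¹ + Bt⁻¹)⁻¹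
        = (Y - S⁻¹ * Bt)ᴴ * S * (Y - S⁻¹ * Bt) := by
      rw [parEq hAtP hBtP, ← hSdef]
      nth_rewrite 1 [hAS]
      simp only [conjTranspose_sub, conjTranspose_mul, conjTranspose_one, h3, hBtP.1.eq,
        Matrix.sub_mul, Matrix.mul_sub, Matrix.one_mul, Matrix.mul_one, Matrix.mul_assoc, e1, e2]
      abel
    rw [hzero] at key
    simp only [Matrix.mul_zero] at key
    exact (sub_eq_zero.mp key).symm
  have hsplit : (At⁻¹ + Bt⁻¹)⁻¹ - ((1 - t) • (A₁⁻¹ + B₁⁻¹)⁻¹ + t • (A₂⁻¹ + B₂⁻¹)⁻¹)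
      = (1 - t) • (Yᴴ * A₁ * Y + (1 - Y)ᴴ * B₁ * (1 - Y) - (A₁⁻¹ + B₁⁻¹)⁻¹)
        + t • (Yᴴ * A₂ * Y + (1 - Y)ᴴ * B₂ * (1 - Y) - (A₂⁻¹ + B₂⁻¹)⁻¹) := by
    rw [heq, hAt, hBt]
    simp only [Matrix.mul_add, Matrix.add_mul, Matrix.mul_smul, Matrix.smul_mul,
      smul_sub, smul_add]
    abel
  rw [hsplit]
  exact (smulPSD (by linarith [ht.2]) (keyIneq hA₁ hB₁ Y)).add
    (smulPSD ht.1 (keyIneq hA₂ hB₂ Y))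
end

section
/- The map (X,Y) ↦ −X^{1/2} log(X^{1/2} Y⁻¹ X^{1/2}) X^{1/2} is jointly operator concave on pairs of positive definite n×n matrices. -/
open Matrix ComplexOrder

noncomputable def msqrt {n : Type*} [Fintype n] [DecidableEq n] (A : Matrix n n ℂ) :
    Matrix n n ℂ :=
  cfc (fun x : ℝ => Real.sqrt x) A

section Stmt19Aux

open MeasureTheory Filter Set Topology

-- scalar lemmas
lemma aux_hasDeriv (d : ℝ) (hd : 0 < d) :
    ∀ x ∈ Set.Ici (0:ℝ), HasDerivAt (fun y : ℝ => Real.log (d + y) - Real.log (1 + y))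
      ((d + x)⁻¹ - (1 + x)⁻¹) x := by
  intro x hx
  have hx0 : (0:ℝ) ≤ x := hx
  have h1 : (0:ℝ) < d + x := by linarith
  have h2 : (0:ℝ) < 1 + x := by linarith
  have A : HasDerivAt (fun y : ℝ => d + y) 1 x := (hasDerivAt_id x).const_add d
  have B : HasDerivAt (fun y : ℝ => 1 + y) 1 x := (hasDerivAt_id x).const_add 1
  simpa [one_div] using (A.log h1.ne').fun_sub (B.log h2.ne')

lemma aux_tendsto (d : ℝ) (hd : 0 < d) :
    Tendsto (fun y : ℝ => Real.log (d + y) - Real.log (1 + y)) atTop (𝓝 0) := by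
  have h0 : Tendsto (fun y : ℝ => (d - 1) / (1 + y)) atTop (𝓝 0) :=
    Tendsto.div_atTop tendsto_const_nhds (tendsto_atTop_add_const_left _ 1 tendsto_id)
  have h1 : Tendsto (fun y : ℝ => 1 + (d - 1) / (1 + y)) atTop (𝓝 1) := by
    simpa using tendsto_const_nhds.add h0
  have h2 : Tendsto (fun y : ℝ => Real.log (1 + (d - 1) / (1 + y))) atTop (𝓝 0) := by
    have := (Real.continuousAt_log (by norm_num : (1:ℝ) ≠ 0)).tendsto.comp h1
    rw [Real.log_one] at this; exact this
  refine h2.congr' ?_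
  filter_upwards [eventually_gt_atTop (0:ℝ)] with y hy
  have h1' : (0:ℝ) < 1 + y := by linarith
  have hd' : (0:ℝ) < d + y := by linarith
  rw [← Real.log_div hd'.ne' h1'.ne']
  congr 1
  field_simp
  ring

lemma aux_integrableOn (d : ℝ) (hd : 0 < d) :
    IntegrableOn (fun y : ℝ => (d + y)⁻¹ - (1 + y)⁻¹) (Ioi 0) := by
  rcases le_total d 1 with h | h
  · refine integrableOn_Ioi_deriv_of_nonneg' (aux_hasDeriv d hd) (fun x hx => ?_)
      (aux_tendsto d hd)
    have hx0 : (0:ℝ) < x := hx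
    have h1 : (0:ℝ) < d + x := by linarith
    have h2 : (1 + x)⁻¹ ≤ (d + x)⁻¹ := by
      apply inv_anti₀ h1; linarith
    linarith
  · refine integrableOn_Ioi_deriv_of_nonpos' (aux_hasDeriv d hd) (fun x hx => ?_)
      (aux_tendsto d hd)
    have hx0 : (0:ℝ) < x := hx
    have h1 : (0:ℝ) < 1 + x := by linarith
    have h2 : (d + x)⁻¹ ≤ (1 + x)⁻¹ := by
      apply inv_anti₀ h1; linarith
    linarith

lemma aux_integral (d : ℝ) (hd : 0 < d) :
    ∫ y in Ioi (0:ℝ), ((d + y)⁻¹ - (1 + y)⁻¹) = - Real.log d := by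
  have h := integral_Ioi_of_hasDerivAt_of_tendsto' (aux_hasDeriv d hd)
      (aux_integrableOn d hd) (aux_tendsto d hd)
  simpa using h


variable {n : Type*} [Fintype n] [DecidableEq n]

lemma conj_quad (B M : Matrix n n ℂ) (v : n → ℂ) :
    star v ⬝ᵥ (Bᴴ * M * B) *ᵥ v = star (B *ᵥ v) ⬝ᵥ M *ᵥ (B *ᵥ v) := by
  rw [star_mulVec, ← mulVec_mulVec, ← mulVec_mulVec, dotProduct_mulVec]

lemma diag_quad (c : n → ℝ) (w : n → ℂ) :
    star w ⬝ᵥ (diagonal fun k => (c k : ℂ)) *ᵥ w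
      = ((∑ k, c k * Complex.normSq (w k) : ℝ) : ℂ) := by
  push_cast
  rw [dotProduct]
  simp only [Pi.star_apply]
  refine Finset.sum_congr rfl fun k _ => ?_
  rw [mulVec_diagonal]
  have : star (w k) * ((c k : ℂ) * w k) = (c k : ℂ) * (w k * star (w k)) := by ring
  rw [this, Complex.star_def, Complex.mul_conj]

lemma posDef_conj_s19 {M : Matrix n n ℂ} (hM : M.PosDef) {B : Matrix n n ℂ}
    (hB : IsUnit B.det) : (Bᴴ * M * B).PosDef := by
  refine Matrix.PosDef.of_dotProduct_mulVec_pos (isHermitian_conjTranspose_mul_mul B hM.isHermitian) fun x hx => ?_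
  rw [conj_quad]
  refine hM.dotProduct_mulVec_pos fun hBx => hx ?_
  have : B⁻¹ *ᵥ (B *ᵥ x) = x := by
    rw [mulVec_mulVec, Matrix.nonsing_inv_mul _ hB, one_mulVec]
  rw [← this, hBx, mulVec_zero]

lemma posSemidef_ofReal_smul {P : Matrix n n ℂ} (hP : P.PosSemidef) {r : ℝ} (hr : 0 ≤ r) :
    ((r : ℂ) • P).PosSemidef := by
  refine Matrix.PosSemidef.of_dotProduct_mulVec_nonneg ?_ fun x => ?_
  · have := hP.isHermitian
    unfold Matrix.IsHermitian at *
    rw [conjTranspose_smul, this, Complex.star_def, Complex.conj_ofReal]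
  · have h := hP.dotProduct_mulVec_nonneg x
    rw [smul_mulVec, dotProduct_smul, smul_eq_mul]
    rw [Complex.nonneg_iff] at h ⊢
    constructor
    · simp only [Complex.mul_re, Complex.ofReal_re, Complex.ofReal_im, zero_mul, sub_zero]
      exact mul_nonneg hr h.1
    · simp [Complex.mul_im, ← h.2]

lemma posDef_ofReal_smul {P : Matrix n n ℂ} (hP : P.PosDef) {r : ℝ} (hr : 0 < r) :
    ((r : ℂ) • P).PosDef := by
  refine Matrix.PosDef.of_dotProduct_mulVec_pos (posSemidef_ofReal_smul hP.posSemidef hr.le).isHermitian fun x hx => ?_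
  have h := hP.dotProduct_mulVec_pos hx
  rw [smul_mulVec, dotProduct_smul, smul_eq_mul]
  rw [Complex.lt_def] at h ⊢
  constructor
  · simp only [Complex.mul_re, Complex.ofReal_re, Complex.ofReal_im, zero_mul, sub_zero,
      Complex.zero_re]
    exact mul_pos hr h.1
  · simp [Complex.mul_im, ← h.2]

lemma posDef_combo {P Q : Matrix n n ℂ} (hP : P.PosDef) (hQ : Q.PosDef) {s t : ℝ}
    (hs : 0 ≤ s) (ht : 0 ≤ t) (hst : s + t = 1) :
    ((s : ℂ) • P + (t : ℂ) • Q).PosDef := by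
  rcases eq_or_lt_of_le hs with hs0 | hs'
  · have ht1 : t = 1 := by linarith
    simpa [← hs0, ht1] using hQ
  · exact (posDef_ofReal_smul hP hs').add_posSemidef (posSemidef_ofReal_smul hQ.posSemidef ht)

lemma smul_inv_eq {c : ℂ} (hc : c ≠ 0) {M : Matrix n n ℂ} (hM : IsUnit M.det) :
    (c • M)⁻¹ = c⁻¹ • M⁻¹ := by
  apply Matrix.inv_eq_right_inv
  rw [smul_mul_smul_comm, mul_inv_cancel₀ hc, Matrix.mul_nonsing_inv _ hM, one_smul]

lemma csmul_nonneg {s : ℝ} (hs : 0 ≤ s) {z : ℂ} (hz : 0 ≤ z) : 0 ≤ (s : ℂ) * z := by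
  rw [Complex.nonneg_iff] at hz ⊢
  constructor
  · simp only [Complex.mul_re, Complex.ofReal_re, Complex.ofReal_im, zero_mul, sub_zero]
    exact mul_nonneg hs hz.1
  · simp [Complex.mul_im, ← hz.2]

lemma harm_core {A B : Matrix n n ℂ} (hA : A.PosDef) (hB : B.PosDef) (x y : n → ℂ) :
    star x ⬝ᵥ A *ᵥ x + star y ⬝ᵥ B *ᵥ y
      = star (x + y) ⬝ᵥ (A⁻¹ + B⁻¹)⁻¹ *ᵥ (x + y)
        + star (x - (A + B)⁻¹ *ᵥ (B *ᵥ (x + y))) ⬝ᵥ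
            (A + B) *ᵥ (x - (A + B)⁻¹ *ᵥ (B *ᵥ (x + y))) := by
  have hSmPD : (A + B).PosDef := hA.add hB
  have hdS : IsUnit (A + B).det := (Matrix.isUnit_iff_isUnit_det _).mp hSmPD.isUnit
  have hdA : IsUnit A.det := (Matrix.isUnit_iff_isUnit_det _).mp hA.isUnit
  have hdB : IsUnit B.det := (Matrix.isUnit_iff_isUnit_det _).mp hB.isUnit
  have hSmInvH : (A + B)⁻¹ᴴ = (A + B)⁻¹ := by
    rw [Matrix.conjTranspose_nonsing_inv, hSmPD.isHermitian.eq]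
  have hBH : Bᴴ = B := hB.isHermitian
  set v : n → ℂ := x + y with hv
  set x₀ : n → ℂ := (A + B)⁻¹ *ᵥ (B *ᵥ v) with hx₀
  have kEq : (A⁻¹ + B⁻¹)⁻¹ = B - B * (A + B)⁻¹ * B := by
    have h1 : A⁻¹ + B⁻¹ = A⁻¹ * (A + B) * B⁻¹ := by
      rw [mul_add, add_mul, Matrix.nonsing_inv_mul _ hdA, one_mul, mul_assoc,
        Matrix.mul_nonsing_inv _ hdB, mul_one, add_comm]
    rw [h1, Matrix.mul_inv_rev, Matrix.mul_inv_rev, Matrix.nonsing_inv_nonsing_inv _ hdA,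
      Matrix.nonsing_inv_nonsing_inv _ hdB]
    have hA' : A = (A + B) - B := by rw [add_sub_cancel_right]
    calc B * ((A + B)⁻¹ * A) = B * (A + B)⁻¹ * ((A + B) - B) := by rw [← hA', mul_assoc]
    _ = B * ((A + B)⁻¹ * (A + B)) - B * (A + B)⁻¹ * B := by
        rw [mul_sub, mul_assoc]
    _ = B - B * (A + B)⁻¹ * B := by rw [Matrix.nonsing_inv_mul _ hdS, mul_one]
  have h₁ : (A + B) *ᵥ x₀ = B *ᵥ v := by
    rw [hx₀, mulVec_mulVec, mulVec_mulVec, Matrix.mul_nonsing_inv _ hdS, one_mul]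
  have h₂ : ∀ z : n → ℂ, star x₀ ⬝ᵥ (A + B) *ᵥ z = star v ⬝ᵥ B *ᵥ z := by
    intro z
    have hsx₀ : star x₀ = star v ᵥ* (B * (A + B)⁻¹) := by
      rw [hx₀, star_mulVec, star_mulVec, hSmInvH, hBH, vecMul_vecMul]
    rw [hsx₀, dotProduct_mulVec, vecMul_vecMul, mul_assoc, Matrix.nonsing_inv_mul _ hdS,
      mul_one, ← dotProduct_mulVec]
  have e₄ : star v ⬝ᵥ B *ᵥ x₀ = star v ⬝ᵥ (B * (A + B)⁻¹ * B) *ᵥ v := by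
    rw [hx₀, mulVec_mulVec, mulVec_mulVec, mul_assoc]
  -- expand the second term on the RHS
  have expand2 : star (x - x₀) ⬝ᵥ (A + B) *ᵥ (x - x₀)
      = star x ⬝ᵥ (A + B) *ᵥ x - star x ⬝ᵥ B *ᵥ v - star v ⬝ᵥ B *ᵥ x
        + star v ⬝ᵥ (B * (A + B)⁻¹ * B) *ᵥ v := by
    rw [star_sub, sub_dotProduct, mulVec_sub, dotProduct_sub, dotProduct_sub, h₂ x,
      h₂ x₀, e₄, h₁]
    ring
  have expand1 : star v ⬝ᵥ (A⁻¹ + B⁻¹)⁻¹ *ᵥ v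
      = star v ⬝ᵥ B *ᵥ v - star v ⬝ᵥ (B * (A + B)⁻¹ * B) *ᵥ v := by
    rw [kEq, sub_mulVec, dotProduct_sub]
  rw [expand1, expand2, hv]
  simp only [star_add, add_dotProduct, mulVec_add, dotProduct_add, add_mulVec]
  ring

lemma harm_le {A B : Matrix n n ℂ} (hA : A.PosDef) (hB : B.PosDef) (x y : n → ℂ) :
    star (x + y) ⬝ᵥ (A⁻¹ + B⁻¹)⁻¹ *ᵥ (x + y) ≤ star x ⬝ᵥ A *ᵥ x + star y ⬝ᵥ B *ᵥ y := by
  rw [harm_core hA hB x y]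
  exact le_add_of_nonneg_right ((hA.add hB).posSemidef.dotProduct_mulVec_nonneg _)

lemma harm_eq {A B : Matrix n n ℂ} (hA : A.PosDef) (hB : B.PosDef) (v : n → ℂ) :
    ∃ x y : n → ℂ, x + y = v ∧
      star v ⬝ᵥ (A⁻¹ + B⁻¹)⁻¹ *ᵥ v = star x ⬝ᵥ A *ᵥ x + star y ⬝ᵥ B *ᵥ y := by
  refine ⟨(A + B)⁻¹ *ᵥ (B *ᵥ v), v - (A + B)⁻¹ *ᵥ (B *ᵥ v), by abel, ?_⟩
  set x₀ : n → ℂ := (A + B)⁻¹ *ᵥ (B *ᵥ v) with hx₀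
  have h := harm_core hA hB x₀ (v - x₀)
  have hxy : x₀ + (v - x₀) = v := by abel
  rw [hxy] at h
  rw [h, show x₀ - x₀ = 0 by abel]
  simp

lemma harm_concave {A₁ B₁ A₂ B₂ : Matrix n n ℂ}
    (hA₁ : A₁.PosDef) (hB₁ : B₁.PosDef) (hA₂ : A₂.PosDef) (hB₂ : B₂.PosDef)
    {s t : ℝ} (hs : 0 ≤ s) (ht : 0 ≤ t)
    (hAc : ((s : ℂ) • A₁ + (t : ℂ) • A₂).PosDef)
    (hBc : ((s : ℂ) • B₁ + (t : ℂ) • B₂).PosDef) (v : n → ℂ) :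
    (s : ℂ) * (star v ⬝ᵥ (A₁⁻¹ + B₁⁻¹)⁻¹ *ᵥ v) + (t : ℂ) * (star v ⬝ᵥ (A₂⁻¹ + B₂⁻¹)⁻¹ *ᵥ v)
      ≤ star v ⬝ᵥ (((s : ℂ) • A₁ + (t : ℂ) • A₂)⁻¹ + ((s : ℂ) • B₁ + (t : ℂ) • B₂)⁻¹)⁻¹ *ᵥ v := by
  obtain ⟨x, y, hxy, heq⟩ := harm_eq hAc hBc v
  have expandA : star v ⬝ᵥ (((s:ℂ) • A₁ + (t:ℂ) • A₂)⁻¹ + ((s:ℂ) • B₁ + (t:ℂ) • B₂)⁻¹)⁻¹ *ᵥ v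
      = (s : ℂ) * (star x ⬝ᵥ A₁ *ᵥ x + star y ⬝ᵥ B₁ *ᵥ y)
        + (t : ℂ) * (star x ⬝ᵥ A₂ *ᵥ x + star y ⬝ᵥ B₂ *ᵥ y) := by
    rw [heq]
    simp only [add_mulVec, smul_mulVec, dotProduct_add, dotProduct_smul, smul_eq_mul]
    ring
  rw [expandA]
  have h1 := harm_le hA₁ hB₁ x y
  have h2 := harm_le hA₂ hB₂ x y
  rw [hxy] at h1 h2
  have g1 : (s : ℂ) * (star v ⬝ᵥ (A₁⁻¹ + B₁⁻¹)⁻¹ *ᵥ v)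
      ≤ (s : ℂ) * (star x ⬝ᵥ A₁ *ᵥ x + star y ⬝ᵥ B₁ *ᵥ y) := by
    have := csmul_nonneg hs (sub_nonneg.mpr h1)
    rw [mul_sub] at this
    exact sub_nonneg.mp this
  have g2 : (t : ℂ) * (star v ⬝ᵥ (A₂⁻¹ + B₂⁻¹)⁻¹ *ᵥ v)
      ≤ (t : ℂ) * (star x ⬝ᵥ A₂ *ᵥ x + star y ⬝ᵥ B₂ *ᵥ y) := by
    have := csmul_nonneg ht (sub_nonneg.mpr h2)
    rw [mul_sub] at this
    exact sub_nonneg.mp this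
  exact add_le_add g1 g2


open scoped MatrixOrder in
lemma msqrt_psd {X : Matrix n n ℂ} (hX : X.PosDef) : (msqrt X).PosSemidef := by
  rw [← Matrix.nonneg_iff_posSemidef, msqrt]
  exact cfc_nonneg (fun x _ => Real.sqrt_nonneg x)

open scoped MatrixOrder in
lemma msqrt_mul_self {X : Matrix n n ℂ} (hX : X.PosDef) : msqrt X * msqrt X = X := by
  have h0 : 0 ≤ X := hX.posSemidef.nonneg
  rw [msqrt, ← cfc_mul (fun x : ℝ => Real.sqrt x) (fun x : ℝ => Real.sqrt x) X]
  conv_rhs => rw [← cfc_id' ℝ X]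
  refine cfc_congr fun x hx => ?_
  exact Real.mul_self_sqrt (spectrum_nonneg_of_nonneg h0 hx)

lemma mlog_eq {A : Matrix n n ℂ} (hA : A.IsHermitian) :
    mlog A = (hA.eigenvectorUnitary : Matrix n n ℂ) *
      diagonal (fun k => ((Real.log (hA.eigenvalues k) : ℝ) : ℂ)) *
      star (hA.eigenvectorUnitary : Matrix n n ℂ) := by
  rw [mlog, Matrix.IsHermitian.cfc_eq hA]
  rfl

set_option maxHeartbeats 2000000 in
lemma key (X Y : Matrix n n ℂ) (hX : X.PosDef) (hY : Y.PosDef) (v : n → ℂ) :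
    (-(msqrt X * mlog (msqrt X * Y⁻¹ * msqrt X) * msqrt X)).IsHermitian ∧
    ∃ w d : n → ℝ, (∀ k, 0 ≤ w k) ∧ (∀ k, 0 < d k) ∧
      star v ⬝ᵥ (-(msqrt X * mlog (msqrt X * Y⁻¹ * msqrt X) * msqrt X)) *ᵥ v
        = ((∑ k, w k * (- Real.log (d k)) : ℝ) : ℂ) ∧
      (∀ l : ℝ, 0 < l →
        star v ⬝ᵥ ((l : ℂ) • X⁻¹ + Y⁻¹)⁻¹ *ᵥ v = ((∑ k, w k * (d k + l)⁻¹ : ℝ) : ℂ)) ∧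
      star v ⬝ᵥ X *ᵥ v = ((∑ k, w k : ℝ) : ℂ) := by
  set S := msqrt X with hSdef
  have hSps : S.PosSemidef := by rw [hSdef]; exact msqrt_psd hX
  have hSH : Sᴴ = S := hSps.isHermitian
  have hSS : S * S = X := by rw [hSdef]; exact msqrt_mul_self hX
  have hdX : IsUnit X.det := (Matrix.isUnit_iff_isUnit_det _).mp hX.isUnit
  have hdS : IsUnit S.det := by
    have h : IsUnit (S.det * S.det) := by rw [← Matrix.det_mul, hSS]; exact hdX
    exact (IsUnit.mul_iff.mp h).1
  clear_value S
  have hA : (S * Y⁻¹ * S).PosDef := by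
    have h := posDef_conj_s19 hY.inv hdS
    rwa [hSH] at h
  set A := S * Y⁻¹ * S with hAdef
  have hAH : A.IsHermitian := hA.isHermitian
  set U : Matrix n n ℂ := (hAH.eigenvectorUnitary : Matrix n n ℂ) with hUdef
  set e : n → ℝ := hAH.eigenvalues with hedef
  have he : ∀ k, 0 < e k := hA.eigenvalues_pos
  have hU1 : U * star U = 1 := mem_unitaryGroup_iff.mp hAH.eigenvectorUnitary.2
  have hU2 : star U * U = 1 := mem_unitaryGroup_iff'.mp hAH.eigenvectorUnitary.2
  set u : n → ℂ := S *ᵥ v with hudef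
  set w' : n → ℂ := star U *ᵥ u with hw'def
  have hsU : (star U)ᴴ = U := by
    rw [Matrix.star_eq_conjTranspose, conjTranspose_conjTranspose]
  have quad : ∀ c : n → ℝ,
      star v ⬝ᵥ (S * (U * diagonal (fun k => (c k : ℂ)) * star U) * S) *ᵥ v
        = ((∑ k, c k * Complex.normSq (w' k) : ℝ) : ℂ) := by
    intro c
    calc star v ⬝ᵥ (S * (U * diagonal (fun k => (c k : ℂ)) * star U) * S) *ᵥ v
        = star v ⬝ᵥ (Sᴴ * (U * diagonal (fun k => (c k : ℂ)) * star U) * S) *ᵥ v := by rw [hSH]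
      _ = star u ⬝ᵥ (U * diagonal (fun k => (c k : ℂ)) * star U) *ᵥ u := by
          rw [conj_quad]
      _ = star u ⬝ᵥ ((star U)ᴴ * diagonal (fun k => (c k : ℂ)) * star U) *ᵥ u := by rw [hsU]
      _ = star w' ⬝ᵥ (diagonal (fun k => (c k : ℂ))) *ᵥ w' := by rw [conj_quad]
      _ = _ := diag_quad c w'
  have hAspec : A = U * diagonal (fun k => ((e k : ℝ) : ℂ)) * star U := hAH.spectral_theorem
  have hmlog : mlog A = U * diagonal (fun k => ((Real.log (e k) : ℝ) : ℂ)) * star U :=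
    mlog_eq hAH
  clear_value U e
  have hGH : (-(S * mlog A * S)).IsHermitian := by
    have hd : (diagonal (fun k => ((Real.log (e k) : ℝ) : ℂ))).IsHermitian :=
      isHermitian_diagonal_of_self_adjoint _ (funext fun k => Complex.conj_ofReal _)
    have hLH : (mlog A).IsHermitian := by
      rw [hmlog]
      have h := isHermitian_conjTranspose_mul_mul (star U) hd
      rwa [hsU] at h
    have h2 := isHermitian_conjTranspose_mul_mul S hLH
    rw [hSH] at h2
    exact h2.neg
  refine ⟨hGH, fun k => Complex.normSq (w' k), e, fun k => Complex.normSq_nonneg _, he,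
    ?_, ?_, ?_⟩
  · rw [neg_mulVec, dotProduct_neg, hmlog, quad (fun k => Real.log (e k)),
      ← Complex.ofReal_neg]
    congr 1
    rw [← Finset.sum_neg_distrib]
    exact Finset.sum_congr rfl fun k _ => by ring
  · intro l hl
    have hel : ∀ k, ((e k + l : ℝ) : ℂ) ≠ 0 := fun k => by
      simp only [ne_eq, Complex.ofReal_eq_zero]
      exact (by linarith [he k] : (0:ℝ) < e k + l).ne'
    have hSXS : S * X⁻¹ * S = 1 := by
      rw [← hSS, Matrix.mul_inv_rev, ← mul_assoc, Matrix.mul_nonsing_inv _ hdS, one_mul,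
        Matrix.nonsing_inv_mul _ hdS]
    have step_a : S * ((l : ℂ) • X⁻¹ + Y⁻¹) * S = A + (l : ℂ) • 1 := by
      rw [mul_add, add_mul, mul_smul_comm, smul_mul_assoc, hSXS, ← hAdef, add_comm]
    have step_b : A + (l : ℂ) • 1 = U * diagonal (fun k => ((e k + l : ℝ) : ℂ)) * star U := by
      have h1 : (l : ℂ) • (1 : Matrix n n ℂ) = U * ((l : ℂ) • 1) * star U := by
        rw [mul_smul_comm, mul_one, smul_mul_assoc, hU1]
      have h2 : diagonal (fun k => ((e k : ℝ) : ℂ)) + (l : ℂ) • (1 : Matrix n n ℂ)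
          = diagonal (fun k => ((e k + l : ℝ) : ℂ)) := by
        rw [← diagonal_one, ← diagonal_smul, diagonal_add]
        congr 1
        funext k
        push_cast
        simp [smul_eq_mul]
      rw [hAspec, h1, ← add_mul, ← mul_add, h2]
    have step_c : ((l : ℂ) • X⁻¹ + Y⁻¹)⁻¹ = S * (A + (l : ℂ) • 1)⁻¹ * S := by
      have hM : (l : ℂ) • X⁻¹ + Y⁻¹ = S⁻¹ * (A + (l : ℂ) • 1) * S⁻¹ := by
        rw [← step_a]
        simp only [← mul_assoc]
        rw [Matrix.nonsing_inv_mul _ hdS, one_mul, mul_assoc _ S S⁻¹,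
          Matrix.mul_nonsing_inv _ hdS, mul_one]
      rw [hM, Matrix.mul_inv_rev, Matrix.mul_inv_rev, Matrix.nonsing_inv_nonsing_inv _ hdS,
        ← mul_assoc]
    have step_d : (A + (l : ℂ) • 1)⁻¹
        = U * diagonal (fun k => (((e k + l)⁻¹ : ℝ) : ℂ)) * star U := by
      rw [step_b]
      apply Matrix.inv_eq_right_inv
      have hmid : diagonal (fun k => ((e k + l : ℝ) : ℂ)) * (star U * U) *
          diagonal (fun k => (((e k + l)⁻¹ : ℝ) : ℂ)) = 1 := by
        rw [hU2, mul_one, diagonal_mul_diagonal]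
        have hfun : (fun i => ((e i + l : ℝ) : ℂ) * (((e i + l)⁻¹ : ℝ) : ℂ)) = fun _ : n => (1:ℂ) := by
          funext i
          rw [← Complex.ofReal_mul,
            mul_inv_cancel₀ (by linarith [he i] : (0:ℝ) < e i + l).ne', Complex.ofReal_one]
        rw [hfun, diagonal_one]
      calc (U * diagonal (fun k => ((e k + l : ℝ) : ℂ)) * star U) *
            (U * diagonal (fun k => (((e k + l)⁻¹ : ℝ) : ℂ)) * star U)
          = U * (diagonal (fun k => ((e k + l : ℝ) : ℂ)) * (star U * U) *
              diagonal (fun k => (((e k + l)⁻¹ : ℝ) : ℂ))) * star U := by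
            simp only [mul_assoc]
        _ = 1 := by rw [hmid, mul_one, hU1]
    rw [step_c, step_d, quad (fun k => (e k + l)⁻¹)]
    congr 1
    exact Finset.sum_congr rfl fun k _ => mul_comm _ _
  · have h1 : diagonal (fun _ : n => ((1 : ℝ) : ℂ)) = (1 : Matrix n n ℂ) := by
      simp
    have h2 : S * (U * diagonal (fun k => (((fun _ : n => (1 : ℝ)) k : ℝ) : ℂ)) * star U) * S
        = X := by
      rw [show (fun k => (((fun _ : n => (1 : ℝ)) k : ℝ) : ℂ)) = (fun _ : n => ((1:ℝ):ℂ)) from rfl,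
        h1, mul_one, hU1, mul_one, hSS]
    have h3 := quad (fun _ : n => (1 : ℝ))
    rw [h2] at h3
    simpa using h3

lemma phi_integrable (w d : n → ℝ) (hd : ∀ k, 0 < d k) :
    IntegrableOn (fun l : ℝ => ∑ k, w k * ((d k + l)⁻¹ - (1 + l)⁻¹)) (Ioi 0) := by
  apply MeasureTheory.integrable_finset_sum
  intro k _
  exact (aux_integrableOn (d k) (hd k)).const_mul (w k)

lemma phi_integral (w d : n → ℝ) (hd : ∀ k, 0 < d k) :
    ∫ l in Ioi (0:ℝ), (∑ k, w k * ((d k + l)⁻¹ - (1 + l)⁻¹))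
      = ∑ k, w k * (- Real.log (d k)) := by
  rw [MeasureTheory.integral_finset_sum _
    (fun k _ => (aux_integrableOn (d k) (hd k)).const_mul (w k))]
  refine Finset.sum_congr rfl fun k _ => ?_
  rw [MeasureTheory.integral_const_mul, aux_integral (d k) (hd k)]

lemma herm_smul_real (s : ℝ) {M : Matrix n n ℂ} (h : M.IsHermitian) :
    ((s : ℂ) • M).IsHermitian := by
  unfold Matrix.IsHermitian at *
  rw [conjTranspose_smul, h, Complex.star_def, Complex.conj_ofReal]

end Stmt19Aux

open MeasureTheory Filter Set Topology in
theorem stmt19 {n : Type*} [Fintype n] [DecidableEq n]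
    (X₁ X₂ Y₁ Y₂ : Matrix n n ℂ) (hX₁ : X₁.PosDef) (hX₂ : X₂.PosDef)
    (hY₁ : Y₁.PosDef) (hY₂ : Y₂.PosDef) (t : ℝ) (ht : t ∈ Set.Icc (0 : ℝ) 1) :
    letI G : Matrix n n ℂ → Matrix n n ℂ → Matrix n n ℂ := fun X Y =>
      -(msqrt X * mlog (msqrt X * Y⁻¹ * msqrt X) * msqrt X)
    (G ((1 - t) • X₁ + t • X₂) ((1 - t) • Y₁ + t • Y₂) -
      ((1 - t) • G X₁ Y₁ + t • G X₂ Y₂)).PosSemidef := by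
  obtain ⟨ht0, ht1⟩ := ht
  have hs0 : (0:ℝ) ≤ 1 - t := by linarith
  have hsm : ∀ (r : ℝ) (M : Matrix n n ℂ), r • M = (r:ℂ) • M := fun r M =>
    RCLike.real_smul_eq_coe_smul (K := ℂ) r M
  dsimp only
  simp only [hsm]
  set s : ℝ := 1 - t with hsdef
  set Xc : Matrix n n ℂ := (s:ℂ) • X₁ + (t:ℂ) • X₂ with hXcdef
  set Yc : Matrix n n ℂ := (s:ℂ) • Y₁ + (t:ℂ) • Y₂ with hYcdef
  have hst : s + t = 1 := by rw [hsdef]; ring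
  have hXc : Xc.PosDef := posDef_combo hX₁ hX₂ hs0 ht0 hst
  have hYc : Yc.PosDef := posDef_combo hY₁ hY₂ hs0 ht0 hst
  refine Matrix.PosSemidef.of_dotProduct_mulVec_nonneg ?_ fun v => ?_
  · have hHc := (key Xc Yc hXc hYc 0).1
    have hH1 := (key X₁ Y₁ hX₁ hY₁ 0).1
    have hH2 := (key X₂ Y₂ hX₂ hY₂ 0).1
    exact hHc.sub ((herm_smul_real s hH1).add (herm_smul_real t hH2))
  · obtain ⟨-, wc, dc, hwc, hdc, hGc, hHc, hXcq⟩ := key Xc Yc hXc hYc v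
    obtain ⟨-, w1, d1, hw1, hd1, hG1, hH1, hX1q⟩ := key X₁ Y₁ hX₁ hY₁ v
    obtain ⟨-, w2, d2, hw2, hd2, hG2, hH2, hX2q⟩ := key X₂ Y₂ hX₂ hY₂ v
    rw [sub_mulVec, dotProduct_sub, add_mulVec, dotProduct_add, smul_mulVec,
      smul_mulVec, dotProduct_smul, dotProduct_smul, smul_eq_mul, smul_eq_mul,
      hGc, hG1, hG2]
    have hcast : ((∑ k, wc k * (- Real.log (dc k)) : ℝ) : ℂ)
        - ((s:ℂ) * ((∑ k, w1 k * (- Real.log (d1 k)) : ℝ) : ℂ)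
          + (t:ℂ) * ((∑ k, w2 k * (- Real.log (d2 k)) : ℝ) : ℂ))
        = (((∑ k, wc k * (- Real.log (dc k)))
            - (s * (∑ k, w1 k * (- Real.log (d1 k))) + t * (∑ k, w2 k * (- Real.log (d2 k))))
            : ℝ) : ℂ) := by
      push_cast
      ring
    rw [hcast, Complex.zero_le_real, sub_nonneg]
    -- real inequality via integrals
    have hb : (∑ k, wc k) = s * (∑ k, w1 k) + t * (∑ k, w2 k) := by
      have hXcc : star v ⬝ᵥ Xc *ᵥ v
          = (s:ℂ) * (star v ⬝ᵥ X₁ *ᵥ v) + (t:ℂ) * (star v ⬝ᵥ X₂ *ᵥ v) := by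
        rw [hXcdef, add_mulVec, dotProduct_add, smul_mulVec, smul_mulVec,
          dotProduct_smul, dotProduct_smul, smul_eq_mul, smul_eq_mul]
      rw [hXcq, hX1q, hX2q] at hXcc
      have : ((∑ k, wc k : ℝ) : ℂ) = ((s * (∑ k, w1 k) + t * (∑ k, w2 k) : ℝ) : ℂ) := by
        rw [hXcc]; push_cast; ring
      exact_mod_cast this
    have hpt : ∀ l ∈ Ioi (0:ℝ),
        s * (∑ k, w1 k * ((d1 k + l)⁻¹ - (1 + l)⁻¹))
          + t * (∑ k, w2 k * ((d2 k + l)⁻¹ - (1 + l)⁻¹))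
        ≤ ∑ k, wc k * ((dc k + l)⁻¹ - (1 + l)⁻¹) := by
      intro l hl
      have hl0 : (0:ℝ) < l := hl
      have hla : ((l⁻¹ : ℝ) : ℂ) ≠ 0 := by
        simp only [ne_eq, Complex.ofReal_eq_zero]
        positivity
      have hinv : ∀ (M : Matrix n n ℂ), M.PosDef → (((l⁻¹:ℝ):ℂ) • M)⁻¹ = (l:ℂ) • M⁻¹ := by
        intro M hM
        rw [smul_inv_eq hla ((Matrix.isUnit_iff_isUnit_det _).mp hM.isUnit)]
        congr 1
        push_cast
        rw [inv_inv]
      have hA1 : (((l⁻¹:ℝ):ℂ) • X₁).PosDef := posDef_ofReal_smul hX₁ (by positivity)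
      have hA2 : (((l⁻¹:ℝ):ℂ) • X₂).PosDef := posDef_ofReal_smul hX₂ (by positivity)
      have hcombA : (s:ℂ) • (((l⁻¹:ℝ):ℂ) • X₁) + (t:ℂ) • (((l⁻¹:ℝ):ℂ) • X₂)
          = ((l⁻¹:ℝ):ℂ) • Xc := by
        rw [hXcdef, smul_add, smul_smul, smul_smul, smul_smul, smul_smul, mul_comm]
        congr 2
        rw [mul_comm]
      have hAc : ((s:ℂ) • (((l⁻¹:ℝ):ℂ) • X₁) + (t:ℂ) • (((l⁻¹:ℝ):ℂ) • X₂)).PosDef := by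
        rw [hcombA]; exact posDef_ofReal_smul hXc (by positivity)
      have hconc := harm_concave hA1 hY₁ hA2 hY₂ hs0 ht0 hAc hYc v
      rw [hcombA, hinv X₁ hX₁, hinv X₂ hX₂, hinv Xc hXc] at hconc
      rw [hH1 l hl0, hH2 l hl0, hHc l hl0] at hconc
      have hconc' : s * (∑ k, w1 k * (d1 k + l)⁻¹) + t * (∑ k, w2 k * (d2 k + l)⁻¹)
          ≤ ∑ k, wc k * (dc k + l)⁻¹ := by
        have : ((s * (∑ k, w1 k * (d1 k + l)⁻¹) + t * (∑ k, w2 k * (d2 k + l)⁻¹) : ℝ) : ℂ)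
            ≤ ((∑ k, wc k * (dc k + l)⁻¹ : ℝ) : ℂ) := by
          push_cast
          push_cast at hconc
          convert hconc using 2 <;> ring
        exact_mod_cast this
      -- expand φ's
      have hsplit : ∀ (w d : n → ℝ),
          (∑ k, w k * ((d k + l)⁻¹ - (1 + l)⁻¹))
            = (∑ k, w k * (d k + l)⁻¹) - (∑ k, w k) * (1 + l)⁻¹ := by
        intro w d
        rw [Finset.sum_mul]
        rw [← Finset.sum_sub_distrib]
        exact Finset.sum_congr rfl fun k _ => by ring
      rw [hsplit w1 d1, hsplit w2 d2, hsplit wc dc]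
      have hbb : (∑ k, wc k) * (1 + l)⁻¹
          = s * ((∑ k, w1 k) * (1 + l)⁻¹) + t * ((∑ k, w2 k) * (1 + l)⁻¹) := by
        rw [hb]; ring
      nlinarith [hconc', hbb]
    calc s * (∑ k, w1 k * (- Real.log (d1 k))) + t * (∑ k, w2 k * (- Real.log (d2 k)))
        = ∫ l in Ioi (0:ℝ), (s * (∑ k, w1 k * ((d1 k + l)⁻¹ - (1 + l)⁻¹))
            + t * (∑ k, w2 k * ((d2 k + l)⁻¹ - (1 + l)⁻¹))) := by
          rw [MeasureTheory.integral_add ((phi_integrable w1 d1 hd1).const_mul s)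
            ((phi_integrable w2 d2 hd2).const_mul t),
            MeasureTheory.integral_const_mul, MeasureTheory.integral_const_mul,
            phi_integral w1 d1 hd1, phi_integral w2 d2 hd2]
      _ ≤ ∫ l in Ioi (0:ℝ), (∑ k, wc k * ((dc k + l)⁻¹ - (1 + l)⁻¹)) := by
          apply MeasureTheory.setIntegral_mono_on
          · exact ((phi_integrable w1 d1 hd1).const_mul s).add
              ((phi_integrable w2 d2 hd2).const_mul t)
          · exact phi_integrable wc dc hdc
          · exact measurableSet_Ioi
          · exact hpt
      _ = ∑ k, wc k * (- Real.log (dc k)) := phi_integral wc dc hdc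
end
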